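/- arXiv:2007.10482 — 10 statements merged into one kernel-verified Lean document; each statement's English description precedes it below -/
import Mathlib

section
/- (Reverse Minkowski inequality) Let p ≥ 1, α > 0, β ∈ (0,1], and let f, g be positive functions on [1,∞) with H^{α,β}_{1,x}[f^p](x) < ∞ and H^{α,β}_{1,x}[g^p](x) < ∞ for x > 1. If 0 < m ≤ f(τ)/g(τ) ≤ M for all τ ∈ (1,x), then (H^{α,β}_{1,x}[f^p](x))^{1/p} + (H^{α,β}_{1,x}[g^p](x))^{1/p} ≤ ((1 + M(m+2))/((m+1)(M+1))) · (H^{α,β}_{1,x}[(f+g)^p](x))^{1/p}. -/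
open MeasureTheory Real

/-- Kernel of the generalized proportional Hadamard fractional integral. -/
noncomputable def Hker (α β x : ℝ) (z : ℝ → ℝ) (t : ℝ) : ℝ :=
  Real.exp ((β - 1) / β * (Real.log x - Real.log t)) *
    (Real.log x - Real.log t) ^ (α - 1) * z t / t

/-- The one-sided generalized proportional Hadamard fractional integral
`H^{α,β}_{1,x}[z](x)`. -/
noncomputable def H (α β x : ℝ) (z : ℝ → ℝ) : ℝ :=
  (1 / (β ^ α * Real.Gamma α)) * ∫ t in Set.Ioo 1 x, Hker α β x z t

lemma Hker_nonneg (α β x : ℝ) (z : ℝ → ℝ) (t : ℝ) (ht : t ∈ Set.Ioo 1 x)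
    (hz : 0 ≤ z t) : 0 ≤ Hker α β x z t := by
  obtain ⟨ht1, htx⟩ := ht
  have ht0 : (0:ℝ) < t := lt_trans one_pos ht1
  have hL : 0 ≤ Real.log x - Real.log t := by
    have := Real.log_le_log ht0 htx.le; linarith
  unfold Hker
  have := Real.rpow_nonneg hL (α - 1)
  positivity

lemma Hker_mono (α β x c : ℝ) (z w : ℝ → ℝ) (t : ℝ) (ht : t ∈ Set.Ioo 1 x)
    (hle : z t ≤ c * w t) : Hker α β x z t ≤ c * Hker α β x w t := by
  obtain ⟨ht1, htx⟩ := ht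
  have ht0 : (0:ℝ) < t := lt_trans one_pos ht1
  have hL : 0 ≤ Real.log x - Real.log t := by
    have := Real.log_le_log ht0 htx.le; linarith
  have hA : 0 ≤ Real.exp ((β - 1) / β * (Real.log x - Real.log t)) *
      (Real.log x - Real.log t) ^ (α - 1) :=
    mul_nonneg (Real.exp_pos _).le (Real.rpow_nonneg hL _)
  unfold Hker
  rw [show c * (Real.exp ((β - 1) / β * (Real.log x - Real.log t)) *
      (Real.log x - Real.log t) ^ (α - 1) * w t / t) =
      Real.exp ((β - 1) / β * (Real.log x - Real.log t)) *
      (Real.log x - Real.log t) ^ (α - 1) * (c * w t) / t from by ring]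
  gcongr

lemma H_nonneg (α β x : ℝ) (hα : 0 < α) (hβ0 : 0 < β) (z : ℝ → ℝ)
    (hz : ∀ t ∈ Set.Ioo 1 x, 0 ≤ z t) : 0 ≤ H α β x z := by
  have hΓ := Real.Gamma_pos_of_pos hα
  apply mul_nonneg (by positivity)
  exact setIntegral_nonneg measurableSet_Ioo fun t ht => Hker_nonneg α β x z t ht (hz t ht)

lemma H_mono (α β x c : ℝ) (hα : 0 < α) (hβ0 : 0 < β) (z w : ℝ → ℝ)
    (hzint : IntegrableOn (Hker α β x z) (Set.Ioo 1 x))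
    (hwint : IntegrableOn (Hker α β x w) (Set.Ioo 1 x))
    (hle : ∀ t ∈ Set.Ioo 1 x, z t ≤ c * w t) :
    H α β x z ≤ c * H α β x w := by
  have hΓ := Real.Gamma_pos_of_pos hα
  unfold H
  rw [← mul_assoc, mul_comm c, mul_assoc]
  apply mul_le_mul_of_nonneg_left _ (by positivity : (0:ℝ) ≤ 1 / (β ^ α * Real.Gamma α))
  rw [← integral_const_mul]
  exact setIntegral_mono_on hzint (hwint.const_mul c) measurableSet_Ioo
    fun t ht => Hker_mono α β x c z w t ht (hle t ht)

theorem stmt_3 (p α β m M x : ℝ) (f g : ℝ → ℝ) (hp : 1 ≤ p) (hα : 0 < α)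
    (hβ : β ∈ Set.Ioc (0:ℝ) 1) (hx : 1 < x)
    (hf : ∀ t ∈ Set.Ici (1:ℝ), 0 < f t) (hg : ∀ t ∈ Set.Ici (1:ℝ), 0 < g t)
    (hfint : IntegrableOn (Hker α β x (fun t => f t ^ p)) (Set.Ioo 1 x))
    (hgint : IntegrableOn (Hker α β x (fun t => g t ^ p)) (Set.Ioo 1 x))
    (hfgint : IntegrableOn (Hker α β x (fun t => (f t + g t) ^ p)) (Set.Ioo 1 x))
    (hm : 0 < m)
    (hbound : ∀ t ∈ Set.Ioo (1:ℝ) x, m ≤ f t / g t ∧ f t / g t ≤ M) :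
    (H α β x fun t => f t ^ p) ^ (1 / p) + (H α β x fun t => g t ^ p) ^ (1 / p) ≤
      (1 + M * (m + 2)) / ((m + 1) * (M + 1)) *
        (H α β x fun t => (f t + g t) ^ p) ^ (1 / p) := by
  obtain ⟨hβ0, hβ1⟩ := hβ
  have hp0 : (0:ℝ) < p := lt_of_lt_of_le one_pos hp
  -- M is positive
  have ht0mem : (1 + x) / 2 ∈ Set.Ioo (1:ℝ) x := ⟨by linarith, by linarith⟩
  have hM : 0 < M := lt_of_lt_of_le hm
    (le_trans (hbound _ ht0mem).1 (hbound _ ht0mem).2)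
  set c1 : ℝ := M / (M + 1) with hc1
  set c2 : ℝ := 1 / (m + 1) with hc2
  have hc1pos : 0 < c1 := by positivity
  have hc2pos : 0 < c2 := by positivity
  -- pointwise bounds
  have hpf : ∀ t ∈ Set.Ioo (1:ℝ) x, f t ^ p ≤ c1 ^ p * (f t + g t) ^ p := by
    intro t ht
    have hft := hf t (le_of_lt ht.1)
    have hgt := hg t (le_of_lt ht.1)
    have hle : f t ≤ c1 * (f t + g t) := by
      have h1 : f t ≤ M * g t := by
        have := (hbound t ht).2
        rw [div_le_iff₀ hgt] at this; linarith
      rw [hc1, div_mul_eq_mul_div, le_div_iff₀ (by linarith : (0:ℝ) < M + 1)]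
      nlinarith
    calc f t ^ p ≤ (c1 * (f t + g t)) ^ p :=
          Real.rpow_le_rpow hft.le hle hp0.le
      _ = c1 ^ p * (f t + g t) ^ p :=
          Real.mul_rpow hc1pos.le (by positivity)
  have hpg : ∀ t ∈ Set.Ioo (1:ℝ) x, g t ^ p ≤ c2 ^ p * (f t + g t) ^ p := by
    intro t ht
    have hft := hf t (le_of_lt ht.1)
    have hgt := hg t (le_of_lt ht.1)
    have hle : g t ≤ c2 * (f t + g t) := by
      have h1 : m * g t ≤ f t := by
        have := (hbound t ht).1
        rw [le_div_iff₀ hgt] at this; linarith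
      rw [hc2, div_mul_eq_mul_div, le_div_iff₀ (by linarith : (0:ℝ) < m + 1)]
      nlinarith
    calc g t ^ p ≤ (c2 * (f t + g t)) ^ p :=
          Real.rpow_le_rpow hgt.le hle hp0.le
      _ = c2 ^ p * (f t + g t) ^ p :=
          Real.mul_rpow hc2pos.le (by positivity)
  -- integral bounds
  have hF : (H α β x fun t => f t ^ p) ≤ c1 ^ p * H α β x fun t => (f t + g t) ^ p :=
    H_mono α β x (c1 ^ p) hα hβ0 _ _ hfint hfgint hpf
  have hG : (H α β x fun t => g t ^ p) ≤ c2 ^ p * H α β x fun t => (f t + g t) ^ p :=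
    H_mono α β x (c2 ^ p) hα hβ0 _ _ hgint hfgint hpg
  have hXnn : 0 ≤ H α β x fun t => (f t + g t) ^ p :=
    H_nonneg α β x hα hβ0 _ fun t ht => by
      have := hf t (le_of_lt ht.1); have := hg t (le_of_lt ht.1); positivity
  have hFnn : 0 ≤ H α β x fun t => f t ^ p :=
    H_nonneg α β x hα hβ0 _ fun t ht => by
      have := hf t (le_of_lt ht.1); positivity
  have hGnn : 0 ≤ H α β x fun t => g t ^ p :=
    H_nonneg α β x hα hβ0 _ fun t ht => by
      have := hg t (le_of_lt ht.1); positivity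
  set X := H α β x fun t => (f t + g t) ^ p
  have hroot : ∀ c : ℝ, 0 < c → (c ^ p * X) ^ (1 / p) = c * X ^ (1 / p) := by
    intro c hc
    rw [Real.mul_rpow (by positivity) hXnn, ← Real.rpow_mul hc.le,
      mul_one_div_cancel hp0.ne', Real.rpow_one]
  have hF' : (H α β x fun t => f t ^ p) ^ (1 / p) ≤ c1 * X ^ (1 / p) := by
    rw [← hroot c1 hc1pos]
    exact Real.rpow_le_rpow hFnn hF (by positivity)
  have hG' : (H α β x fun t => g t ^ p) ^ (1 / p) ≤ c2 * X ^ (1 / p) := by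
    rw [← hroot c2 hc2pos]
    exact Real.rpow_le_rpow hGnn hG (by positivity)
  have hXr : 0 ≤ X ^ (1 / p) := Real.rpow_nonneg hXnn _
  have hsum : c1 + c2 = (1 + M * (m + 2)) / ((m + 1) * (M + 1)) := by
    rw [hc1, hc2]
    field_simp
    ring
  nlinarith [hF', hG', hXr, mul_le_mul_of_nonneg_right (le_of_eq hsum) hXr]
end

section
/- If f(τ)/g(τ) ≤ M for all τ ∈ (1,x) and p ≥ 1, then (H^{α,β}_{1,x}[f^p](x))^{1/p} ≤ (M/(M+1)) · (H^{α,β}_{1,x}[(f+g)^p](x))^{1/p}, for positive functions f, g with finite integrals, α > 0, β ∈ (0,1], x > 1. -/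
open MeasureTheory Real

theorem stmt_5 (p α β M x : ℝ) (f g : ℝ → ℝ) (hp : 1 ≤ p) (hα : 0 < α)
    (hβ : β ∈ Set.Ioc (0:ℝ) 1) (hx : 1 < x)
    (hf : ∀ t ∈ Set.Ici (1:ℝ), 0 < f t) (hg : ∀ t ∈ Set.Ici (1:ℝ), 0 < g t)
    (hfint : IntegrableOn (Hker α β x (fun t => f t ^ p)) (Set.Ioo 1 x))
    (hfgint : IntegrableOn (Hker α β x (fun t => (f t + g t) ^ p)) (Set.Ioo 1 x))
    (hbound : ∀ t ∈ Set.Ioo (1:ℝ) x, f t / g t ≤ M) :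
    (H α β x fun t => f t ^ p) ^ (1 / p) ≤
      M / (M + 1) * (H α β x fun t => (f t + g t) ^ p) ^ (1 / p) := by
  obtain ⟨hβ0, hβ1⟩ := hβ
  have hp0 : (0:ℝ) < p := lt_of_lt_of_le one_pos hp
  -- M is positive
  have ht0 : (1 + x) / 2 ∈ Set.Ioo (1:ℝ) x := by constructor <;> nlinarith
  have hM : 0 < M := by
    have h1 : (1:ℝ) ≤ (1 + x) / 2 := le_of_lt ht0.1
    exact lt_of_lt_of_le (div_pos (hf _ h1) (hg _ h1)) (hbound _ ht0)
  set c : ℝ := M / (M + 1) with hc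
  have hc0 : 0 < c := div_pos hM (by linarith)
  -- pointwise bound on the kernel
  have hker : ∀ t ∈ Set.Ioo (1:ℝ) x,
      Hker α β x (fun t => f t ^ p) t ≤
        c ^ p * Hker α β x (fun t => (f t + g t) ^ p) t := by
    intro t ht
    have ht1 : (1:ℝ) ≤ t := le_of_lt ht.1
    have htpos : (0:ℝ) < t := lt_of_lt_of_le one_pos ht1
    have hft := hf t ht1
    have hgt := hg t ht1
    have hfg : f t ≤ M * g t := (div_le_iff₀ hgt).mp (hbound t ht)
    have hfc : f t ≤ c * (f t + g t) := by
      rw [hc, div_mul_eq_mul_div, le_div_iff₀ (by linarith : (0:ℝ) < M + 1)]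
      nlinarith
    have hzp : f t ^ p ≤ c ^ p * (f t + g t) ^ p := by
      calc f t ^ p ≤ (c * (f t + g t)) ^ p :=
            Real.rpow_le_rpow (le_of_lt hft) hfc (le_of_lt hp0)
        _ = c ^ p * (f t + g t) ^ p :=
            Real.mul_rpow (le_of_lt hc0) (by linarith)
    have hlt : 0 < Real.log x - Real.log t := sub_pos.mpr (Real.log_lt_log htpos ht.2)
    have hA : 0 ≤ Real.exp ((β - 1) / β * (Real.log x - Real.log t)) *
        (Real.log x - Real.log t) ^ (α - 1) :=
      mul_nonneg (Real.exp_pos _).le (Real.rpow_nonneg hlt.le _)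
    simp only [Hker]
    set A := Real.exp ((β - 1) / β * (Real.log x - Real.log t)) *
        (Real.log x - Real.log t) ^ (α - 1) with hA'
    calc A * f t ^ p / t ≤ A * (c ^ p * (f t + g t) ^ p) / t := by
          gcongr
      _ = c ^ p * (A * (f t + g t) ^ p / t) := by ring
  -- integral monotonicity
  have hint : (∫ t in Set.Ioo 1 x, Hker α β x (fun t => f t ^ p) t) ≤
      ∫ t in Set.Ioo 1 x, c ^ p * Hker α β x (fun t => (f t + g t) ^ p) t :=
    setIntegral_mono_on hfint (hfgint.const_mul _) measurableSet_Ioo hker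
  rw [integral_const_mul] at hint
  have hcoef : 0 < 1 / (β ^ α * Real.Gamma α) := by
    have := Real.Gamma_pos_of_pos hα
    positivity
  have hHfg : H α β x (fun t => f t ^ p) ≤ c ^ p * H α β x (fun t => (f t + g t) ^ p) := by
    simp only [H]
    rw [mul_left_comm]
    exact mul_le_mul_of_nonneg_left hint (le_of_lt hcoef)
  have hHnn : 0 ≤ H α β x (fun t => f t ^ p) := by
    apply mul_nonneg (le_of_lt hcoef)
    apply setIntegral_nonneg measurableSet_Ioo
    intro t ht
    have ht1 : (1:ℝ) ≤ t := le_of_lt ht.1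
    have htpos : (0:ℝ) < t := lt_of_lt_of_le one_pos ht1
    have hlt : 0 < Real.log x - Real.log t := sub_pos.mpr (Real.log_lt_log htpos ht.2)
    simp only [Hker]
    exact div_nonneg (mul_nonneg (mul_nonneg (Real.exp_pos _).le
      (Real.rpow_nonneg hlt.le _)) (Real.rpow_nonneg (hf t ht1).le _)) htpos.le
  have hHfgnn : 0 ≤ H α β x (fun t => (f t + g t) ^ p) := by
    have h := hHnn.trans hHfg
    nlinarith [Real.rpow_pos_of_pos hc0 p]
  calc (H α β x fun t => f t ^ p) ^ (1 / p)
      ≤ (c ^ p * H α β x (fun t => (f t + g t) ^ p)) ^ (1 / p) :=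
        Real.rpow_le_rpow hHnn hHfg (by positivity)
    _ = c * (H α β x fun t => (f t + g t) ^ p) ^ (1 / p) := by
        rw [Real.mul_rpow (by positivity) hHfgnn, ← Real.rpow_mul (le_of_lt hc0),
          mul_one_div, div_self (ne_of_gt hp0), Real.rpow_one]
end

section
/- If 0 < m ≤ f(τ)/g(τ) for all τ ∈ (1,x) and p ≥ 1, then (H^{α,β}_{1,x}[g^p](x))^{1/p} ≤ (1/(m+1)) · (H^{α,β}_{1,x}[(f+g)^p](x))^{1/p}, for positive functions f, g with finite integrals, α > 0, β ∈ (0,1], x > 1. -/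
open MeasureTheory Real

theorem stmt_6 (p α β m x : ℝ) (f g : ℝ → ℝ) (hp : 1 ≤ p) (hα : 0 < α)
    (hβ : β ∈ Set.Ioc (0:ℝ) 1) (hx : 1 < x)
    (hf : ∀ t ∈ Set.Ici (1:ℝ), 0 < f t) (hg : ∀ t ∈ Set.Ici (1:ℝ), 0 < g t)
    (hgint : IntegrableOn (Hker α β x (fun t => g t ^ p)) (Set.Ioo 1 x))
    (hfgint : IntegrableOn (Hker α β x (fun t => (f t + g t) ^ p)) (Set.Ioo 1 x))
    (hm : 0 < m) (hbound : ∀ t ∈ Set.Ioo (1:ℝ) x, m ≤ f t / g t) :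
    (H α β x fun t => g t ^ p) ^ (1 / p) ≤
      1 / (m + 1) * (H α β x fun t => (f t + g t) ^ p) ^ (1 / p) := by
  set c : ℝ := 1 / (m + 1) with hc
  have hc0 : 0 < c := by positivity
  have hp0 : 0 < p := lt_of_lt_of_le one_pos hp
  have hC : 0 ≤ 1 / (β ^ α * Real.Gamma α) :=
    div_nonneg zero_le_one
      (le_of_lt (mul_pos (Real.rpow_pos_of_pos hβ.1 α) (Real.Gamma_pos_of_pos hα)))
  -- pointwise bound on the kernels
  have hker_le : ∀ t ∈ Set.Ioo (1:ℝ) x,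
      Hker α β x (fun t => g t ^ p) t ≤
        c ^ p * Hker α β x (fun t => (f t + g t) ^ p) t := by
    intro t ht
    have ht1 : (1:ℝ) < t := ht.1
    have ht0 : (0:ℝ) < t := lt_trans one_pos ht1
    have hgt : 0 < g t := hg t (le_of_lt ht1)
    have hft : 0 < f t := hf t (le_of_lt ht1)
    have hlog : 0 < Real.log x - Real.log t :=
      sub_pos.mpr (Real.log_lt_log ht0 ht.2)
    have hK : 0 ≤ Real.exp ((β - 1) / β * (Real.log x - Real.log t)) *
        (Real.log x - Real.log t) ^ (α - 1) :=
      le_of_lt (mul_pos (Real.exp_pos _) (Real.rpow_pos_of_pos hlog _))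
    have hbd : m * g t ≤ f t := by
      have := hbound t ht
      calc m * g t ≤ (f t / g t) * g t := by
            exact mul_le_mul_of_nonneg_right this (le_of_lt hgt)
        _ = f t := by field_simp
    have hgle : g t ≤ c * (f t + g t) := by
      rw [hc, div_mul_eq_mul_div, le_div_iff₀ (by linarith : (0:ℝ) < m + 1)]
      ring_nf
      nlinarith
    have hpow : g t ^ p ≤ c ^ p * (f t + g t) ^ p := by
      have h1 : g t ^ p ≤ (c * (f t + g t)) ^ p :=
        Real.rpow_le_rpow (le_of_lt hgt) hgle (le_of_lt hp0)
      rwa [Real.mul_rpow (le_of_lt hc0) (by positivity)] at h1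
    show Real.exp ((β - 1) / β * (Real.log x - Real.log t)) *
        (Real.log x - Real.log t) ^ (α - 1) * (g t ^ p) / t ≤
        c ^ p * (Real.exp ((β - 1) / β * (Real.log x - Real.log t)) *
        (Real.log x - Real.log t) ^ (α - 1) * ((f t + g t) ^ p) / t)
    calc Real.exp ((β - 1) / β * (Real.log x - Real.log t)) *
        (Real.log x - Real.log t) ^ (α - 1) * (g t ^ p) / t
        ≤ Real.exp ((β - 1) / β * (Real.log x - Real.log t)) *
          (Real.log x - Real.log t) ^ (α - 1) * (c ^ p * (f t + g t) ^ p) / t := by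
          gcongr
      _ = c ^ p * (Real.exp ((β - 1) / β * (Real.log x - Real.log t)) *
          (Real.log x - Real.log t) ^ (α - 1) * ((f t + g t) ^ p) / t) := by ring
  -- kernel nonnegativity
  have hker_nn : ∀ (z : ℝ → ℝ), (∀ t ∈ Set.Ioo (1:ℝ) x, 0 ≤ z t) →
      ∀ t ∈ Set.Ioo (1:ℝ) x, 0 ≤ Hker α β x z t := by
    intro z hz t ht
    have ht0 : (0:ℝ) < t := lt_trans one_pos ht.1
    have hlog : 0 < Real.log x - Real.log t :=
      sub_pos.mpr (Real.log_lt_log ht0 ht.2)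
    unfold Hker
    have := hz t ht
    positivity
  have hgnn : ∀ t ∈ Set.Ioo (1:ℝ) x, (0:ℝ) ≤ g t ^ p := fun t ht =>
    Real.rpow_nonneg (le_of_lt (hg t (le_of_lt ht.1))) p
  have hfgnn : ∀ t ∈ Set.Ioo (1:ℝ) x, (0:ℝ) ≤ (f t + g t) ^ p := fun t ht =>
    Real.rpow_nonneg (by linarith [hf t (le_of_lt ht.1), hg t (le_of_lt ht.1)]) p
  have hHg_nn : 0 ≤ H α β x (fun t => g t ^ p) :=
    mul_nonneg hC (setIntegral_nonneg measurableSet_Ioo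
      (hker_nn (fun t => g t ^ p) hgnn))
  have hHfg_nn : 0 ≤ H α β x (fun t => (f t + g t) ^ p) :=
    mul_nonneg hC (setIntegral_nonneg measurableSet_Ioo
      (hker_nn (fun t => (f t + g t) ^ p) hfgnn))
  -- integral inequality
  have hint : (∫ t in Set.Ioo 1 x, Hker α β x (fun t => g t ^ p) t) ≤
      c ^ p * ∫ t in Set.Ioo 1 x, Hker α β x (fun t => (f t + g t) ^ p) t := by
    rw [← integral_const_mul]
    exact setIntegral_mono_on hgint (hfgint.const_mul _) measurableSet_Ioo hker_le
  have hH : H α β x (fun t => g t ^ p) ≤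
      c ^ p * H α β x (fun t => (f t + g t) ^ p) := by
    unfold H
    calc (1 / (β ^ α * Real.Gamma α)) *
          ∫ t in Set.Ioo 1 x, Hker α β x (fun t => g t ^ p) t
        ≤ (1 / (β ^ α * Real.Gamma α)) *
          (c ^ p * ∫ t in Set.Ioo 1 x, Hker α β x (fun t => (f t + g t) ^ p) t) :=
          mul_le_mul_of_nonneg_left hint hC
      _ = c ^ p * ((1 / (β ^ α * Real.Gamma α)) *
          ∫ t in Set.Ioo 1 x, Hker α β x (fun t => (f t + g t) ^ p) t) := by ring
  have hfinal := Real.rpow_le_rpow hHg_nn hH (by positivity : (0:ℝ) ≤ 1 / p)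
  have hcp : (c ^ p) ^ (1 / p) = c := by
    rw [← Real.rpow_mul (le_of_lt hc0), mul_one_div_cancel (ne_of_gt hp0),
      Real.rpow_one]
  rwa [Real.mul_rpow (Real.rpow_nonneg (le_of_lt hc0) p) hHfg_nn, hcp] at hfinal
end

section
/- Let p > 1, 1/p + 1/q = 1, α > 0, β ∈ (0,1], x > 1, and let f, g be positive functions on [1,∞) with H^{α,β}_{1,x}[f^p](x) < ∞, H^{α,β}_{1,x}[g^q](x) < ∞. If 0 < m ≤ f(τ)^p / g(τ)^q ≤ M < ∞ for τ ∈ [1,x], then (H^{α,β}_{1,x}[f^p](x))^{1/p} · (H^{α,β}_{1,x}[g^q](x))^{1/q} ≤ (M/m)^{1/(pq)} · H^{α,β}_{1,x}[fg](x). -/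
open MeasureTheory Real

lemma aux_rpow (p q m M A B C : ℝ) (hp : 0 < p) (hq : 0 < q)
    (hpq : 1 / p + 1 / q = 1) (hm : 0 < m) (hM : 0 < M)
    (hA : 0 ≤ A) (hB : 0 ≤ B) (hC : 0 ≤ C)
    (h1 : A ≤ M ^ (1/q) * C) (h2 : B ≤ m ^ (-(1/p)) * C) :
    A ^ (1/p) * B ^ (1/q) ≤ (M / m) ^ (1/(p*q)) * C := by
  rcases eq_or_lt_of_le hC with h | hCpos
  · have hA0 : A = 0 := le_antisymm (by simpa [← h] using h1) hA
    rw [hA0, ← h, Real.zero_rpow (by positivity : (1:ℝ)/p ≠ 0), zero_mul, mul_zero]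
  · have e1 : A ^ (1/p) ≤ (M ^ (1/q)) ^ (1/p) * C ^ (1/p) := by
      calc A ^ (1/p) ≤ (M ^ (1/q) * C) ^ (1/p) :=
            Real.rpow_le_rpow hA h1 (by positivity)
        _ = (M ^ (1/q)) ^ (1/p) * C ^ (1/p) :=
            Real.mul_rpow (by positivity) hC
    have e2 : B ^ (1/q) ≤ (m ^ (-(1/p))) ^ (1/q) * C ^ (1/q) := by
      calc B ^ (1/q) ≤ (m ^ (-(1/p)) * C) ^ (1/q) :=
            Real.rpow_le_rpow hB h2 (by positivity)
        _ = (m ^ (-(1/p))) ^ (1/q) * C ^ (1/q) :=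
            Real.mul_rpow (by positivity) hC
    have hprod : A ^ (1/p) * B ^ (1/q) ≤
        ((M ^ (1/q)) ^ (1/p) * C ^ (1/p)) * ((m ^ (-(1/p))) ^ (1/q) * C ^ (1/q)) :=
      mul_le_mul e1 e2 (Real.rpow_nonneg hB _) (by positivity)
    refine hprod.trans_eq ?_
    have hMe : (M ^ (1/q)) ^ (1/p) = M ^ (1/(p*q)) := by
      rw [← Real.rpow_mul hM.le]; congr 1; ring
    have hme : (m ^ (-(1/p))) ^ (1/q) = m ^ (-(1/(p*q))) := by
      rw [← Real.rpow_mul hm.le]; congr 1; ring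
    have hCC : C ^ (1/p) * C ^ (1/q) = C := by
      rw [← Real.rpow_add hCpos, hpq, Real.rpow_one]
    have hMm : M ^ (1/(p*q)) * m ^ (-(1/(p*q))) = (M/m) ^ (1/(p*q)) := by
      rw [Real.rpow_neg hm.le, Real.div_rpow hM.le hm.le]; ring
    rw [hMe, hme]
    calc M ^ (1/(p*q)) * C ^ (1/p) * (m ^ (-(1/(p*q))) * C ^ (1/q))
        = (M ^ (1/(p*q)) * m ^ (-(1/(p*q)))) * (C ^ (1/p) * C ^ (1/q)) := by ring
      _ = (M/m) ^ (1/(p*q)) * C := by rw [hMm, hCC]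

theorem stmt_8 (p q α β m M x : ℝ) (f g : ℝ → ℝ) (hp : 1 < p)
    (hpq : 1 / p + 1 / q = 1) (hα : 0 < α) (hβ : β ∈ Set.Ioc (0:ℝ) 1) (hx : 1 < x)
    (hf : ∀ t ∈ Set.Ici (1:ℝ), 0 < f t) (hg : ∀ t ∈ Set.Ici (1:ℝ), 0 < g t)
    (hfint : IntegrableOn (Hker α β x (fun t => f t ^ p)) (Set.Ioo 1 x))
    (hgint : IntegrableOn (Hker α β x (fun t => g t ^ q)) (Set.Ioo 1 x))
    (hm : 0 < m)
    (hbound : ∀ t ∈ Set.Icc (1:ℝ) x, m ≤ f t ^ p / g t ^ q ∧ f t ^ p / g t ^ q ≤ M) :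
    (H α β x fun t => f t ^ p) ^ (1 / p) * (H α β x fun t => g t ^ q) ^ (1 / q) ≤
      (M / m) ^ (1 / (p * q)) * H α β x (fun t => f t * g t) := by
  obtain ⟨hβ0, hβ1⟩ := hβ
  have hp0 : 0 < p := lt_trans one_pos hp
  have h1p : 1/p < 1 := by rw [div_lt_one hp0]; exact hp
  have h1q : 0 < 1/q := by linarith
  have hq0 : 0 < q := one_div_pos.mp h1q
  have h1x : (1:ℝ) ∈ Set.Icc 1 x := ⟨le_refl 1, hx.le⟩
  have hpq' : q + p = p * q := by
    have h := hpq
    field_simp [hp0.ne', hq0.ne'] at h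
    linarith
  have hM : 0 < M := lt_of_lt_of_le hm (le_trans (hbound 1 h1x).1 (hbound 1 h1x).2)
  -- positivity of evaluated functions on Ioo
  have hker_nn : ∀ (z : ℝ → ℝ), (∀ t ∈ Set.Ioo (1:ℝ) x, 0 ≤ z t) →
      ∀ t ∈ Set.Ioo (1:ℝ) x, 0 ≤ Hker α β x z t := by
    intro z hz t ht
    have ht0 : 0 < t := lt_trans one_pos ht.1
    have hL : 0 < Real.log x - Real.log t := sub_pos.mpr (Real.log_lt_log ht0 ht.2)
    exact div_nonneg (mul_nonneg (mul_nonneg (Real.exp_pos _).le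
      (Real.rpow_nonneg hL.le _)) (hz t ht)) ht0.le
  -- key multiplicative identity of the kernel
  have key : ∀ t ∈ Set.Ioo (1:ℝ) x,
      Hker α β x (fun s => f s * g s) t
        = (Hker α β x (fun s => f s ^ p) t) ^ (1/p) *
            (Hker α β x (fun s => g s ^ q) t) ^ (1/q) := by
    intro t ht
    have ht0 : 0 < t := lt_trans one_pos ht.1
    have hL : 0 < Real.log x - Real.log t := sub_pos.mpr (Real.log_lt_log ht0 ht.2)
    have hft : 0 < f t := hf t ht.1.le
    have hgt : 0 < g t := hg t ht.1.le
    have hNt : 0 < Real.exp ((β-1)/β*(Real.log x - Real.log t)) *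
        (Real.log x - Real.log t) ^ (α-1) / t :=
      div_pos (mul_pos (Real.exp_pos _) (Real.rpow_pos_of_pos hL _)) ht0
    set N := Real.exp ((β-1)/β*(Real.log x - Real.log t)) *
        (Real.log x - Real.log t) ^ (α-1) / t with hNdef
    have e1 : Hker α β x (fun s => f s ^ p) t = N * f t ^ p := by
      simp only [Hker, hNdef]; ring
    have e2 : Hker α β x (fun s => g s ^ q) t = N * g t ^ q := by
      simp only [Hker, hNdef]; ring
    have e3 : Hker α β x (fun s => f s * g s) t = N * (f t * g t) := by
      simp only [Hker, hNdef]; ring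
    rw [e1, e2, e3, Real.mul_rpow hNt.le (by positivity),
      Real.mul_rpow hNt.le (by positivity), one_div p, one_div q,
      Real.rpow_rpow_inv hft.le hp0.ne', Real.rpow_rpow_inv hgt.le hq0.ne']
    have : N ^ p⁻¹ * N ^ q⁻¹ = N := by
      rw [← Real.rpow_add hNt]
      have : p⁻¹ + q⁻¹ = 1 := by rw [← one_div, ← one_div]; exact hpq
      rw [this, Real.rpow_one]
    calc N * (f t * g t) = (N ^ p⁻¹ * N ^ q⁻¹) * (f t * g t) := by rw [this]
      _ = N ^ p⁻¹ * f t * (N ^ q⁻¹ * g t) := by ring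
  -- pointwise inequalities
  have ineq1 : ∀ t ∈ Set.Ioo (1:ℝ) x,
      Hker α β x (fun s => f s ^ p) t ≤
        M ^ (1/q) * Hker α β x (fun s => f s * g s) t := by
    intro t ht
    have ht0 : 0 < t := lt_trans one_pos ht.1
    have hL : 0 < Real.log x - Real.log t := sub_pos.mpr (Real.log_lt_log ht0 ht.2)
    have hft : 0 < f t := hf t ht.1.le
    have hgt : 0 < g t := hg t ht.1.le
    have hb := (hbound t ⟨ht.1.le, ht.2.le⟩).2
    have hgq : 0 < g t ^ q := Real.rpow_pos_of_pos hgt _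
    have hfM : f t ^ p ≤ M * g t ^ q := (div_le_iff₀ hgq).mp hb
    have hstep : (f t ^ p) ^ (1/q) ≤ M ^ (1/q) * g t := by
      calc (f t ^ p) ^ (1/q) ≤ (M * g t ^ q) ^ (1/q) :=
            Real.rpow_le_rpow (by positivity) hfM (by positivity)
        _ = M ^ (1/q) * (g t ^ q) ^ (1/q) := Real.mul_rpow hM.le hgq.le
        _ = M ^ (1/q) * g t := by
            rw [one_div q, Real.rpow_rpow_inv hgt.le hq0.ne']
    have hsplit : f t ^ p = f t * (f t ^ p) ^ (1/q) := by
      rw [← Real.rpow_mul hft.le]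
      nth_rewrite 2 [← Real.rpow_one (f t)]
      rw [← Real.rpow_add hft]
      congr 1
      field_simp
      linarith [hpq']
    have hfg : f t ^ p ≤ M ^ (1/q) * (f t * g t) := by
      calc f t ^ p = f t * (f t ^ p) ^ (1/q) := hsplit
        _ ≤ f t * (M ^ (1/q) * g t) := mul_le_mul_of_nonneg_left hstep hft.le
        _ = M ^ (1/q) * (f t * g t) := by ring
    -- transfer through kernel
    have e1 : Hker α β x (fun s => f s ^ p) t ≤ Hker α β x (fun s => M ^ (1/q) * (f s * g s)) t := by
      simp only [Hker]
      gcongr <;> first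
        | exact hfg
        | exact mul_nonneg (Real.exp_pos _).le (Real.rpow_nonneg hL.le _)
        | positivity
    have e2 : Hker α β x (fun s => M ^ (1/q) * (f s * g s)) t
        = M ^ (1/q) * Hker α β x (fun s => f s * g s) t := by
      simp only [Hker]; ring
    rw [← e2]; exact e1
  have ineq2 : ∀ t ∈ Set.Ioo (1:ℝ) x,
      Hker α β x (fun s => g s ^ q) t ≤
        m ^ (-(1/p)) * Hker α β x (fun s => f s * g s) t := by
    intro t ht
    have ht0 : 0 < t := lt_trans one_pos ht.1
    have hL : 0 < Real.log x - Real.log t := sub_pos.mpr (Real.log_lt_log ht0 ht.2)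
    have hft : 0 < f t := hf t ht.1.le
    have hgt : 0 < g t := hg t ht.1.le
    have hb := (hbound t ⟨ht.1.le, ht.2.le⟩).1
    have hgq : 0 < g t ^ q := Real.rpow_pos_of_pos hgt _
    have hgm : g t ^ q ≤ f t ^ p / m := by
      rw [le_div_iff₀ hm]
      have := (le_div_iff₀ hgq).mp hb
      linarith [this]
    have hstep : (g t ^ q) ^ (1/p) ≤ m ^ (-(1/p)) * f t := by
      calc (g t ^ q) ^ (1/p) ≤ (f t ^ p / m) ^ (1/p) :=
            Real.rpow_le_rpow (by positivity) hgm (by positivity)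
        _ = (f t ^ p) ^ (1/p) / m ^ (1/p) :=
            Real.div_rpow (by positivity) hm.le _
        _ = m ^ (-(1/p)) * f t := by
            rw [one_div p, Real.rpow_rpow_inv hft.le hp0.ne', Real.rpow_neg hm.le,
              div_eq_mul_inv, mul_comm]
    have hsplit : g t ^ q = g t * (g t ^ q) ^ (1/p) := by
      rw [← Real.rpow_mul hgt.le]
      nth_rewrite 2 [← Real.rpow_one (g t)]
      rw [← Real.rpow_add hgt]
      congr 1
      field_simp
      linarith [hpq']
    have hfg : g t ^ q ≤ m ^ (-(1/p)) * (f t * g t) := by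
      calc g t ^ q = g t * (g t ^ q) ^ (1/p) := hsplit
        _ ≤ g t * (m ^ (-(1/p)) * f t) := mul_le_mul_of_nonneg_left hstep hgt.le
        _ = m ^ (-(1/p)) * (f t * g t) := by ring
    have e1 : Hker α β x (fun s => g s ^ q) t ≤ Hker α β x (fun s => m ^ (-(1/p)) * (f s * g s)) t := by
      simp only [Hker]
      gcongr <;> first
        | exact hfg
        | exact mul_nonneg (Real.exp_pos _).le (Real.rpow_nonneg hL.le _)
        | positivity
    have e2 : Hker α β x (fun s => m ^ (-(1/p)) * (f s * g s)) t
        = m ^ (-(1/p)) * Hker α β x (fun s => f s * g s) t := by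
      simp only [Hker]; ring
    rw [← e2]; exact e1
  -- integrability of the kernel of f*g
  have hmeas : AEStronglyMeasurable (Hker α β x (fun s => f s * g s))
      (volume.restrict (Set.Ioo 1 x)) := by
    have haux : AEStronglyMeasurable (fun t =>
        (Hker α β x (fun s => f s ^ p) t) ^ (1/p) *
          (Hker α β x (fun s => g s ^ q) t) ^ (1/q))
        (volume.restrict (Set.Ioo 1 x)) := by
      exact ((hfint.aestronglyMeasurable.aemeasurable.pow aemeasurable_const).mul
        (hgint.aestronglyMeasurable.aemeasurable.pow aemeasurable_const)).aestronglyMeasurable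
    refine haux.congr ?_
    filter_upwards [ae_restrict_mem measurableSet_Ioo] with t ht
    exact (key t ht).symm
  have hfgint : IntegrableOn (Hker α β x (fun s => f s * g s)) (Set.Ioo 1 x) := by
    refine Integrable.mono' ((hfint.const_mul (1/p)).add (hgint.const_mul (1/q))) hmeas ?_
    filter_upwards [ae_restrict_mem measurableSet_Ioo] with t ht
    have hfp : 0 ≤ Hker α β x (fun s => f s ^ p) t :=
      hker_nn _ (fun s hs => Real.rpow_nonneg (hf s hs.1.le).le _) t ht
    have hgq : 0 ≤ Hker α β x (fun s => g s ^ q) t :=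
      hker_nn _ (fun s hs => Real.rpow_nonneg (hg s hs.1.le).le _) t ht
    have hnn : 0 ≤ Hker α β x (fun s => f s * g s) t :=
      hker_nn _ (fun s hs => mul_nonneg (hf s hs.1.le).le (hg s hs.1.le).le) t ht
    rw [Real.norm_eq_abs, abs_of_nonneg hnn, key t ht]
    exact Real.geom_mean_le_arith_mean2_weighted (by positivity) (by positivity)
      hfp hgq hpq
  -- integral inequalities
  have int1 : ∫ t in Set.Ioo 1 x, Hker α β x (fun s => f s ^ p) t ≤
      M ^ (1/q) * ∫ t in Set.Ioo 1 x, Hker α β x (fun s => f s * g s) t := by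
    rw [← MeasureTheory.integral_const_mul]
    exact setIntegral_mono_on hfint (hfgint.const_mul _) measurableSet_Ioo ineq1
  have int2 : ∫ t in Set.Ioo 1 x, Hker α β x (fun s => g s ^ q) t ≤
      m ^ (-(1/p)) * ∫ t in Set.Ioo 1 x, Hker α β x (fun s => f s * g s) t := by
    rw [← MeasureTheory.integral_const_mul]
    exact setIntegral_mono_on hgint (hfgint.const_mul _) measurableSet_Ioo ineq2
  -- nonnegativity of integrals
  have nnf : 0 ≤ ∫ t in Set.Ioo 1 x, Hker α β x (fun s => f s ^ p) t :=
    setIntegral_nonneg measurableSet_Ioo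
      (hker_nn _ (fun s hs => Real.rpow_nonneg (hf s hs.1.le).le _))
  have nng : 0 ≤ ∫ t in Set.Ioo 1 x, Hker α β x (fun s => g s ^ q) t :=
    setIntegral_nonneg measurableSet_Ioo
      (hker_nn _ (fun s hs => Real.rpow_nonneg (hg s hs.1.le).le _))
  have nnfg : 0 ≤ ∫ t in Set.Ioo 1 x, Hker α β x (fun s => f s * g s) t :=
    setIntegral_nonneg measurableSet_Ioo
      (hker_nn _ (fun s hs => mul_nonneg (hf s hs.1.le).le (hg s hs.1.le).le))
  -- conclude
  have hc : 0 < 1/(β ^ α * Real.Gamma α) := by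
    have := Real.rpow_pos_of_pos hβ0 α
    have := Real.Gamma_pos_of_pos hα
    positivity
  simp only [H]
  set c := 1/(β ^ α * Real.Gamma α)
  set Ifp := ∫ t in Set.Ioo 1 x, Hker α β x (fun s => f s ^ p) t with hIfp
  set Igq := ∫ t in Set.Ioo 1 x, Hker α β x (fun s => g s ^ q) t with hIgq
  set Ifg := ∫ t in Set.Ioo 1 x, Hker α β x (fun s => f s * g s) t with hIfg
  refine aux_rpow p q m M (c * Ifp) (c * Igq) (c * Ifg) hp0 hq0 hpq hm hM
    (by positivity) (by positivity) (by positivity) ?_ ?_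
  · calc c * Ifp ≤ c * (M ^ (1/q) * Ifg) := mul_le_mul_of_nonneg_left int1 hc.le
      _ = M ^ (1/q) * (c * Ifg) := by ring
  · calc c * Igq ≤ c * (m ^ (-(1/p)) * Ifg) := mul_le_mul_of_nonneg_left int2 hc.le
      _ = m ^ (-(1/p)) * (c * Ifg) := by ring
end

section
/- Let p > 1, 1/p + 1/q = 1, α > 0, β ∈ (0,1], x > 1, and f, g positive integrable functions on [1,∞) with 0 < m < f(τ)/g(τ) < M for τ ∈ (1,x). Then H^{α,β}_{1,x}[fg](x) ≤ (2^{p-1} M^p / (p(M+1)^p)) · H^{α,β}_{1,x}[f^p + g^p](x) + (2^{q-1} / (q(m+1)^q)) · H^{α,β}_{1,x}[f^q + g^q](x). -/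
open MeasureTheory Real

private lemma two_rpow_aux (a b : ℝ) (ha : 0 ≤ a) (hb : 0 ≤ b) {p : ℝ} (hp : 1 ≤ p) :
    (a + b) ^ p ≤ 2 ^ (p - 1) * (a ^ p + b ^ p) := by
  have h := NNReal.rpow_add_le_mul_rpow_add_rpow ⟨a, ha⟩ ⟨b, hb⟩ hp
  exact_mod_cast h

private lemma ptwise {p q m M : ℝ} (a b : ℝ) (hp : 1 < p)
    (hpq : Real.HolderConjugate p q) (ha : 0 < a) (hb : 0 < b) (hm : 0 < m)
    (h1 : m < a / b) (h2 : a / b < M) :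
    a * b ≤ 2 ^ (p - 1) * M ^ p / (p * (M + 1) ^ p) * (a ^ p + b ^ p) +
      2 ^ (q - 1) / (q * (m + 1) ^ q) * (a ^ q + b ^ q) := by
  have hq : 1 < q := hpq.symm.lt
  have hM : 0 < M := lt_trans (lt_trans hm h1) h2
  have haM : a < M * b := (div_lt_iff₀ hb).mp h2
  have hmb : m * b < a := by
    have := (lt_div_iff₀ hb).mp h1
    linarith
  have hfa : a ≤ M * (a + b) / (M + 1) := by
    rw [le_div_iff₀ (by linarith : (0:ℝ) < M + 1)]
    nlinarith
  have hgb : b ≤ (a + b) / (m + 1) := by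
    rw [le_div_iff₀ (by linarith : (0:ℝ) < m + 1)]
    nlinarith
  have hA : a ^ p ≤ M ^ p * (2 ^ (p - 1) * (a ^ p + b ^ p)) / (M + 1) ^ p := by
    calc a ^ p ≤ (M * (a + b) / (M + 1)) ^ p :=
          Real.rpow_le_rpow ha.le hfa (by linarith)
      _ = M ^ p * (a + b) ^ p / (M + 1) ^ p := by
          rw [Real.div_rpow (by positivity) (by linarith),
            Real.mul_rpow hM.le (by positivity)]
      _ ≤ M ^ p * (2 ^ (p - 1) * (a ^ p + b ^ p)) / (M + 1) ^ p := by
          gcongr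
          all_goals first
            | exact two_rpow_aux a b ha.le hb.le hp.le
            | exact Real.rpow_pos_of_pos (by linarith) p
            | positivity
  have hB : b ^ q ≤ 2 ^ (q - 1) * (a ^ q + b ^ q) / (m + 1) ^ q := by
    calc b ^ q ≤ ((a + b) / (m + 1)) ^ q :=
          Real.rpow_le_rpow hb.le hgb (by linarith)
      _ = (a + b) ^ q / (m + 1) ^ q :=
          Real.div_rpow (by positivity) (by linarith) q
      _ ≤ 2 ^ (q - 1) * (a ^ q + b ^ q) / (m + 1) ^ q := by
          gcongr
          all_goals first
            | exact two_rpow_aux a b ha.le hb.le hq.le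
            | exact Real.rpow_pos_of_pos (by linarith) q
            | positivity
  calc a * b ≤ a ^ p / p + b ^ q / q :=
        Real.young_inequality_of_nonneg ha.le hb.le hpq
    _ ≤ (M ^ p * (2 ^ (p - 1) * (a ^ p + b ^ p)) / (M + 1) ^ p) / p +
          (2 ^ (q - 1) * (a ^ q + b ^ q) / (m + 1) ^ q) / q := by
        gcongr
        all_goals first | exact hA | exact hB | linarith
    _ = 2 ^ (p - 1) * M ^ p / (p * (M + 1) ^ p) * (a ^ p + b ^ p) +
          2 ^ (q - 1) / (q * (m + 1) ^ q) * (a ^ q + b ^ q) := by ring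

private lemma Hker_comb {α β x : ℝ} (A B : ℝ) (z z1 z2 : ℝ → ℝ) (t : ℝ) (ht : 0 < t)
    (hlog : 0 ≤ Real.log x - Real.log t) (hz : z t ≤ A * z1 t + B * z2 t) :
    Hker α β x z t ≤ A * Hker α β x z1 t + B * Hker α β x z2 t := by
  unfold Hker
  set E := Real.exp ((β - 1) / β * (Real.log x - Real.log t)) *
    (Real.log x - Real.log t) ^ (α - 1) with hEdef
  have hE : 0 ≤ E := mul_nonneg (Real.exp_pos _).le (Real.rpow_nonneg hlog _)
  have hrw : A * (E * z1 t / t) + B * (E * z2 t / t) = E * (A * z1 t + B * z2 t) / t := by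
    ring
  rw [hrw]
  gcongr

theorem stmt_9 (p q α β m M x : ℝ) (f g : ℝ → ℝ) (hp : 1 < p)
    (hpq : 1 / p + 1 / q = 1) (hα : 0 < α) (hβ : β ∈ Set.Ioc (0:ℝ) 1) (hx : 1 < x)
    (hf : ∀ t ∈ Set.Ici (1:ℝ), 0 < f t) (hg : ∀ t ∈ Set.Ici (1:ℝ), 0 < g t)
    (hfgint : IntegrableOn (Hker α β x (fun t => f t * g t)) (Set.Ioo 1 x))
    (hpint : IntegrableOn (Hker α β x (fun t => f t ^ p + g t ^ p)) (Set.Ioo 1 x))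
    (hqint : IntegrableOn (Hker α β x (fun t => f t ^ q + g t ^ q)) (Set.Ioo 1 x))
    (hm : 0 < m)
    (hbound : ∀ t ∈ Set.Ioo (1:ℝ) x, m < f t / g t ∧ f t / g t < M) :
    H α β x (fun t => f t * g t) ≤
      (2 : ℝ) ^ (p - 1) * M ^ p / (p * (M + 1) ^ p) *
          H α β x (fun t => f t ^ p + g t ^ p) +
        (2 : ℝ) ^ (q - 1) / (q * (m + 1) ^ q) *
          H α β x (fun t => f t ^ q + g t ^ q) := by
  have hpq' : Real.HolderConjugate p q := Real.holderConjugate_iff.mpr ⟨hp, by rw [← one_div, ← one_div]; exact hpq⟩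
  set A : ℝ := (2 : ℝ) ^ (p - 1) * M ^ p / (p * (M + 1) ^ p) with hAdef
  set B : ℝ := (2 : ℝ) ^ (q - 1) / (q * (m + 1) ^ q) with hBdef
  have key : ∀ t ∈ Set.Ioo (1:ℝ) x,
      Hker α β x (fun t => f t * g t) t ≤
        A * Hker α β x (fun t => f t ^ p + g t ^ p) t +
          B * Hker α β x (fun t => f t ^ q + g t ^ q) t := by
    intro t ht
    have ht1 : (1:ℝ) < t := ht.1
    have htpos : (0:ℝ) < t := lt_trans one_pos ht1
    have hlog : 0 ≤ Real.log x - Real.log t :=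
      (sub_pos.mpr (Real.log_lt_log htpos ht.2)).le
    refine Hker_comb A B _ _ _ t htpos hlog ?_
    exact ptwise (f t) (g t) hp hpq' (hf t ht1.le) (hg t ht1.le) hm
      (hbound t ht).1 (hbound t ht).2
  have hint2 : IntegrableOn
      (fun t => A * Hker α β x (fun t => f t ^ p + g t ^ p) t +
        B * Hker α β x (fun t => f t ^ q + g t ^ q) t) (Set.Ioo 1 x) :=
    (hpint.const_mul A).add (hqint.const_mul B)
  have hI : (∫ t in Set.Ioo 1 x, Hker α β x (fun t => f t * g t) t) ≤
      ∫ t in Set.Ioo 1 x,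
        (A * Hker α β x (fun t => f t ^ p + g t ^ p) t +
          B * Hker α β x (fun t => f t ^ q + g t ^ q) t) :=
    setIntegral_mono_on hfgint hint2 measurableSet_Ioo key
  have hsplit : (∫ t in Set.Ioo 1 x,
        (A * Hker α β x (fun t => f t ^ p + g t ^ p) t +
          B * Hker α β x (fun t => f t ^ q + g t ^ q) t)) =
      A * (∫ t in Set.Ioo 1 x, Hker α β x (fun t => f t ^ p + g t ^ p) t) +
        B * (∫ t in Set.Ioo 1 x, Hker α β x (fun t => f t ^ q + g t ^ q) t) := by
    rw [integral_add (hpint.const_mul A) (hqint.const_mul B),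
      integral_const_mul, integral_const_mul]
  have hc : 0 ≤ 1 / (β ^ α * Real.Gamma α) := by
    have h1 : 0 < β ^ α := Real.rpow_pos_of_pos hβ.1 α
    have h2 : 0 < Real.Gamma α := Real.Gamma_pos_of_pos hα
    positivity
  unfold H
  calc (1 / (β ^ α * Real.Gamma α)) *
        ∫ t in Set.Ioo 1 x, Hker α β x (fun t => f t * g t) t ≤
      (1 / (β ^ α * Real.Gamma α)) *
        (A * (∫ t in Set.Ioo 1 x, Hker α β x (fun t => f t ^ p + g t ^ p) t) +
          B * (∫ t in Set.Ioo 1 x, Hker α β x (fun t => f t ^ q + g t ^ q) t)) := by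
        exact mul_le_mul_of_nonneg_left (hI.trans_eq hsplit) hc
    _ = A * ((1 / (β ^ α * Real.Gamma α)) *
          ∫ t in Set.Ioo 1 x, Hker α β x (fun t => f t ^ p + g t ^ p) t) +
        B * ((1 / (β ^ α * Real.Gamma α)) *
          ∫ t in Set.Ioo 1 x, Hker α β x (fun t => f t ^ q + g t ^ q) t) := by ring
end

section
/- If f(τ)/g(τ) < M for all τ ∈ (1,x) and p > 1, then H^{α,β}_{1,x}[f^p](x) ≤ (M^p/(M+1)^p) · H^{α,β}_{1,x}[(f+g)^p](x), for positive functions f, g with finite integrals, α > 0, β ∈ (0,1], x > 1. -/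
open MeasureTheory Real

theorem stmt_10 (p α β M x : ℝ) (f g : ℝ → ℝ) (hp : 1 < p) (hα : 0 < α)
    (hβ : β ∈ Set.Ioc (0:ℝ) 1) (hx : 1 < x)
    (hf : ∀ t ∈ Set.Ici (1:ℝ), 0 < f t) (hg : ∀ t ∈ Set.Ici (1:ℝ), 0 < g t)
    (hfint : IntegrableOn (Hker α β x (fun t => f t ^ p)) (Set.Ioo 1 x))
    (hfgint : IntegrableOn (Hker α β x (fun t => (f t + g t) ^ p)) (Set.Ioo 1 x))
    (hbound : ∀ t ∈ Set.Ioo (1:ℝ) x, f t / g t < M) :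
    H α β x (fun t => f t ^ p) ≤
      M ^ p / (M + 1) ^ p * H α β x (fun t => (f t + g t) ^ p) := by
  set c : ℝ := M ^ p / (M + 1) ^ p with hc
  -- M is positive
  have hmid : (1 + x) / 2 ∈ Set.Ioo (1:ℝ) x := by constructor <;> linarith
  have hM : 0 < M := by
    have h1 := hbound _ hmid
    have hfpos := hf _ (le_of_lt hmid.1)
    have hgpos := hg _ (le_of_lt hmid.1)
    exact lt_trans (div_pos hfpos hgpos) h1
  have hM1 : (0:ℝ) < M + 1 := by linarith
  -- pointwise bound on the kernels
  have hker : ∀ t ∈ Set.Ioo (1:ℝ) x,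
      Hker α β x (fun t => f t ^ p) t ≤ c * Hker α β x (fun t => (f t + g t) ^ p) t := by
    intro t ht
    have ht1 : (1:ℝ) < t := ht.1
    have htx : t < x := ht.2
    have hfpos := hf t (le_of_lt ht1)
    have hgpos := hg t (le_of_lt ht1)
    have hfg : f t < M * g t := (div_lt_iff₀ hgpos).mp (hbound t ht)
    have key : f t ≤ M / (M + 1) * (f t + g t) := by
      rw [div_mul_eq_mul_div, le_div_iff₀ hM1]
      nlinarith
    have hpow : f t ^ p ≤ c * (f t + g t) ^ p := by
      have h1 : f t ^ p ≤ (M / (M + 1) * (f t + g t)) ^ p :=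
        Real.rpow_le_rpow hfpos.le key (by linarith)
      calc f t ^ p ≤ (M / (M + 1) * (f t + g t)) ^ p := h1
        _ = c * (f t + g t) ^ p := by
            rw [Real.mul_rpow (by positivity) (by positivity),
              Real.div_rpow hM.le hM1.le]
    have hl : 0 < Real.log x - Real.log t :=
      sub_pos.mpr (Real.log_lt_log (by linarith) htx)
    have hK : 0 ≤ Real.exp ((β - 1) / β * (Real.log x - Real.log t)) *
        (Real.log x - Real.log t) ^ (α - 1) / t :=
      div_nonneg (mul_nonneg (Real.exp_pos _).le (Real.rpow_pos_of_pos hl _).le)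
        (by linarith)
    have h2 : Hker α β x (fun t => f t ^ p) t =
        (Real.exp ((β - 1) / β * (Real.log x - Real.log t)) *
          (Real.log x - Real.log t) ^ (α - 1) / t) * f t ^ p := by
      unfold Hker; ring
    have h3 : Hker α β x (fun t => (f t + g t) ^ p) t =
        (Real.exp ((β - 1) / β * (Real.log x - Real.log t)) *
          (Real.log x - Real.log t) ^ (α - 1) / t) * (f t + g t) ^ p := by
      unfold Hker; ring
    rw [h2, h3, mul_left_comm]
    exact mul_le_mul_of_nonneg_left hpow hK
  -- integral comparison
  have hint : (∫ t in Set.Ioo 1 x, Hker α β x (fun t => f t ^ p) t) ≤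
      c * ∫ t in Set.Ioo 1 x, Hker α β x (fun t => (f t + g t) ^ p) t := by
    rw [← MeasureTheory.integral_const_mul]
    exact setIntegral_mono_on hfint (hfgint.const_mul c) measurableSet_Ioo hker
  have hpos : 0 ≤ 1 / (β ^ α * Real.Gamma α) := by
    have : 0 < Real.Gamma α := Real.Gamma_pos_of_pos hα
    have : (0:ℝ) < β ^ α := Real.rpow_pos_of_pos hβ.1 α
    positivity
  unfold H
  calc (1 / (β ^ α * Real.Gamma α)) * ∫ t in Set.Ioo 1 x, Hker α β x (fun t => f t ^ p) t
      ≤ (1 / (β ^ α * Real.Gamma α)) *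
        (c * ∫ t in Set.Ioo 1 x, Hker α β x (fun t => (f t + g t) ^ p) t) :=
        mul_le_mul_of_nonneg_left hint hpos
    _ = c * ((1 / (β ^ α * Real.Gamma α)) *
        ∫ t in Set.Ioo 1 x, Hker α β x (fun t => (f t + g t) ^ p) t) := by ring
end

section
/- (Chebyshev-type inequality) Let f, g, h be positive continuous functions on [1,∞) such that (g(τ) − g(σ)) · (f(σ)/h(σ) − f(τ)/h(τ)) ≥ 0 for all τ, σ ∈ [1,x), x > 1. Then for α > 0, β ∈ (0,1]: H^{α,β}_{1,x}[f](x) / H^{α,β}_{1,x}[h](x) ≥ H^{α,β}_{1,x}[g·f](x) / H^{α,β}_{1,x}[g·h](x). -/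
open MeasureTheory Real

theorem stmt_15 (α β x : ℝ) (f g h : ℝ → ℝ) (hα : 0 < α)
    (hβ : β ∈ Set.Ioc (0:ℝ) 1) (hx : 1 < x)
    (hf : ∀ t ∈ Set.Ici (1:ℝ), 0 < f t) (hg : ∀ t ∈ Set.Ici (1:ℝ), 0 < g t)
    (hh : ∀ t ∈ Set.Ici (1:ℝ), 0 < h t)
    (hfc : ContinuousOn f (Set.Ici 1)) (hgc : ContinuousOn g (Set.Ici 1))
    (hhc : ContinuousOn h (Set.Ici 1))
    (hfint : IntegrableOn (Hker α β x f) (Set.Ioo 1 x))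
    (hhint : IntegrableOn (Hker α β x h) (Set.Ioo 1 x))
    (hgfint : IntegrableOn (Hker α β x (fun t => g t * f t)) (Set.Ioo 1 x))
    (hghint : IntegrableOn (Hker α β x (fun t => g t * h t)) (Set.Ioo 1 x))
    (hhpos : 0 < H α β x h) (hghpos : 0 < H α β x (fun t => g t * h t))
    (hsync : ∀ τ ∈ Set.Ico (1:ℝ) x, ∀ σ ∈ Set.Ico (1:ℝ) x,
      0 ≤ (g τ - g σ) * (f σ / h σ - f τ / h τ)) :
    H α β x (fun t => g t * f t) / H α β x (fun t => g t * h t) ≤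
      H α β x f / H α β x h := by
  obtain ⟨hβ0, hβ1⟩ := hβ
  have hcpos : 0 < 1 / (β ^ α * Real.Gamma α) :=
    div_pos one_pos (mul_pos (Real.rpow_pos_of_pos hβ0 α) (Real.Gamma_pos_of_pos hα))
  -- positivity of the kernel against h on the interval
  have hKh : ∀ t ∈ Set.Ioo (1:ℝ) x, 0 ≤ Hker α β x h t := by
    intro t ht
    have ht0 : (0:ℝ) < t := lt_trans one_pos ht.1
    have hL : 0 < Real.log x - Real.log t :=
      sub_pos.mpr (Real.log_lt_log ht0 ht.2)
    have := hh t (le_of_lt ht.1)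
    unfold Hker
    positivity
  -- pointwise algebraic identity
  have hpt : ∀ τ ∈ Set.Ioo (1:ℝ) x, ∀ σ ∈ Set.Ioo (1:ℝ) x,
      Hker α β x (fun t => g t * h t) τ * Hker α β x f σ +
        Hker α β x f τ * Hker α β x (fun t => g t * h t) σ -
      (Hker α β x (fun t => g t * f t) τ * Hker α β x h σ +
        Hker α β x h τ * Hker α β x (fun t => g t * f t) σ)
      = (Hker α β x h τ * Hker α β x h σ) *
          ((g τ - g σ) * (f σ / h σ - f τ / h τ)) := by
    intro τ hτ σ hσ
    have hτ0 : (τ:ℝ) ≠ 0 := ne_of_gt (lt_trans one_pos hτ.1)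
    have hσ0 : (σ:ℝ) ≠ 0 := ne_of_gt (lt_trans one_pos hσ.1)
    have hhτ : h τ ≠ 0 := ne_of_gt (hh τ (le_of_lt hτ.1))
    have hhσ : h σ ≠ 0 := ne_of_gt (hh σ (le_of_lt hσ.1))
    unfold Hker
    field_simp
    ring
  -- the double integral is nonnegative
  have hprod : (volume.restrict (Set.Ioo (1:ℝ) x)).prod (volume.restrict (Set.Ioo (1:ℝ) x)) = (volume.prod volume).restrict
      ((Set.Ioo (1:ℝ) x) ×ˢ (Set.Ioo (1:ℝ) x)) := by
    rw [Measure.prod_restrict]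
  have h1 : 0 ≤ ∫ p : ℝ × ℝ,
      (Hker α β x (fun t => g t * h t) p.1 * Hker α β x f p.2 +
        Hker α β x f p.1 * Hker α β x (fun t => g t * h t) p.2 -
      (Hker α β x (fun t => g t * f t) p.1 * Hker α β x h p.2 +
        Hker α β x h p.1 * Hker α β x (fun t => g t * f t) p.2)) ∂((volume.restrict (Set.Ioo (1:ℝ) x)).prod (volume.restrict (Set.Ioo (1:ℝ) x))) := by
    apply integral_nonneg_of_ae
    rw [hprod]
    filter_upwards [ae_restrict_mem (measurableSet_Ioo.prod measurableSet_Ioo)]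
      with p hp
    obtain ⟨hp1, hp2⟩ := hp
    rw [hpt p.1 hp1 p.2 hp2]
    have hIco : Set.Ioo (1:ℝ) x ⊆ Set.Ico (1:ℝ) x := Set.Ioo_subset_Ico_self
    exact mul_nonneg (mul_nonneg (hKh _ hp1) (hKh _ hp2))
      (hsync p.1 (hIco hp1) p.2 (hIco hp2))
  -- evaluate the double integral
  have i1 := hghint.mul_prod hfint
  have i2 := hfint.mul_prod hghint
  have i3 := hgfint.mul_prod hhint
  have i4 := hhint.mul_prod hgfint
  have h2 := integral_sub (i1.add i2) (i3.add i4)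
  simp only [Pi.add_apply] at h2
  rw [integral_add i1 i2, integral_add i3 i4,
      integral_prod_mul, integral_prod_mul, integral_prod_mul, integral_prod_mul] at h2
  rw [h2] at h1
  -- key inequality between products of integrals
  have hkey : (∫ t in Set.Ioo (1:ℝ) x, Hker α β x (fun t => g t * f t) t) *
      (∫ t in Set.Ioo (1:ℝ) x, Hker α β x h t) ≤
      (∫ t in Set.Ioo (1:ℝ) x, Hker α β x f t) *
      (∫ t in Set.Ioo (1:ℝ) x, Hker α β x (fun t => g t * h t) t) := by
    nlinarith [h1]
  rw [div_le_div_iff₀ hghpos hhpos]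
  have e : ∀ z : ℝ → ℝ, H α β x z =
      (1 / (β ^ α * Real.Gamma α)) * ∫ t in Set.Ioo 1 x, Hker α β x z t := fun _ => rfl
  calc H α β x (fun t => g t * f t) * H α β x h
      = (1 / (β ^ α * Real.Gamma α)) * (1 / (β ^ α * Real.Gamma α)) *
        ((∫ t in Set.Ioo (1:ℝ) x, Hker α β x (fun t => g t * f t) t) *
         (∫ t in Set.Ioo (1:ℝ) x, Hker α β x h t)) := by rw [e, e]; ring
    _ ≤ (1 / (β ^ α * Real.Gamma α)) * (1 / (β ^ α * Real.Gamma α)) *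
        ((∫ t in Set.Ioo (1:ℝ) x, Hker α β x f t) *
         (∫ t in Set.Ioo (1:ℝ) x, Hker α β x (fun t => g t * h t) t)) := by
        apply mul_le_mul_of_nonneg_left hkey (by positivity)
    _ = H α β x f * H α β x (fun t => g t * h t) := by rw [e, e]; ring
end

section
/- (Two-parameter Chebyshev-type inequality) Let f, g, h be positive continuous functions on [1,∞) such that (g(τ) − g(σ)) · (f(σ)/h(σ) − f(τ)/h(τ)) ≥ 0 for all τ, σ ∈ (1,x), x > 1. Then for α, φ > 0 and β, φ' ∈ (0,1]: H^{α,β}_{1,x}[f](x)·H^{φ,φ'}_{1,x}[g·h](x) + H^{φ,φ'}_{1,x}[f](x)·H^{α,β}_{1,x}[g·h](x) ≥ H^{α,β}_{1,x}[h](x)·H^{φ,φ'}_{1,x}[g·f](x) + H^{φ,φ'}_{1,x}[h](x)·H^{α,β}_{1,x}[g·f](x). -/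
open MeasureTheory Real

theorem stmt_16 (α β φ φ' x : ℝ) (f g h : ℝ → ℝ) (hα : 0 < α) (hφ : 0 < φ)
    (hβ : β ∈ Set.Ioc (0:ℝ) 1) (hφ' : φ' ∈ Set.Ioc (0:ℝ) 1) (hx : 1 < x)
    (hf : ∀ t ∈ Set.Ici (1:ℝ), 0 < f t) (hg : ∀ t ∈ Set.Ici (1:ℝ), 0 < g t)
    (hh : ∀ t ∈ Set.Ici (1:ℝ), 0 < h t)
    (hfc : ContinuousOn f (Set.Ici 1)) (hgc : ContinuousOn g (Set.Ici 1))
    (hhc : ContinuousOn h (Set.Ici 1))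
    (hfint : IntegrableOn (Hker α β x f) (Set.Ioo 1 x))
    (hhint : IntegrableOn (Hker α β x h) (Set.Ioo 1 x))
    (hgfint : IntegrableOn (Hker α β x (fun t => g t * f t)) (Set.Ioo 1 x))
    (hghint : IntegrableOn (Hker α β x (fun t => g t * h t)) (Set.Ioo 1 x))
    (hfint' : IntegrableOn (Hker φ φ' x f) (Set.Ioo 1 x))
    (hhint' : IntegrableOn (Hker φ φ' x h) (Set.Ioo 1 x))
    (hgfint' : IntegrableOn (Hker φ φ' x (fun t => g t * f t)) (Set.Ioo 1 x))
    (hghint' : IntegrableOn (Hker φ φ' x (fun t => g t * h t)) (Set.Ioo 1 x))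
    (hsync : ∀ τ ∈ Set.Ioo (1:ℝ) x, ∀ σ ∈ Set.Ioo (1:ℝ) x,
      0 ≤ (g τ - g σ) * (f σ / h σ - f τ / h τ)) :
    H α β x h * H φ φ' x (fun t => g t * f t) +
        H φ φ' x h * H α β x (fun t => g t * f t) ≤
      H α β x f * H φ φ' x (fun t => g t * h t) +
        H φ φ' x f * H α β x (fun t => g t * h t) := by
  
  -- abbreviations for the restricted measure and the plain integrals
  set μ : Measure ℝ := volume.restrict (Set.Ioo 1 x) with hμ
  have cα : (0:ℝ) < 1 / (β ^ α * Real.Gamma α) := by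
    have h1 : (0:ℝ) < β ^ α := Real.rpow_pos_of_pos hβ.1 α
    have h2 : 0 < Real.Gamma α := Real.Gamma_pos_of_pos hα
    positivity
  have cφ : (0:ℝ) < 1 / (φ' ^ φ * Real.Gamma φ) := by
    have h1 : (0:ℝ) < φ' ^ φ := Real.rpow_pos_of_pos hφ'.1 φ
    have h2 : 0 < Real.Gamma φ := Real.Gamma_pos_of_pos hφ
    positivity
  -- the double-integral inequality
  set F : ℝ × ℝ → ℝ := fun z =>
    Hker α β x f z.1 * Hker φ φ' x (fun t => g t * h t) z.2 +
      Hker α β x (fun t => g t * h t) z.1 * Hker φ φ' x f z.2 -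
      (Hker α β x h z.1 * Hker φ φ' x (fun t => g t * f t) z.2 +
        Hker α β x (fun t => g t * f t) z.1 * Hker φ φ' x h z.2) with hF
  have hFnn : 0 ≤ ∫ z, F z ∂(μ.prod μ) := by
    rw [hμ, Measure.prod_restrict]
    apply setIntegral_nonneg (measurableSet_Ioo.prod measurableSet_Ioo)
    rintro ⟨τ, σ⟩ ⟨hτ, hσ⟩
    have hτ1 : (1:ℝ) < τ := hτ.1
    have hσ1 : (1:ℝ) < σ := hσ.1
    have hτ0 : (0:ℝ) < τ := by linarith
    have hσ0 : (0:ℝ) < σ := by linarith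
    have hhτ : 0 < h τ := hh τ (le_of_lt hτ1)
    have hhσ : 0 < h σ := hh σ (le_of_lt hσ1)
    have hlτ : (0:ℝ) ≤ Real.log x - Real.log τ :=
      sub_nonneg.2 (Real.log_le_log hτ0 (le_of_lt hτ.2))
    have hlσ : (0:ℝ) ≤ Real.log x - Real.log σ :=
      sub_nonneg.2 (Real.log_le_log hσ0 (le_of_lt hσ.2))
    have hsy := hsync τ hτ σ hσ
    have hB : (0:ℝ) ≤ g τ * f σ * h τ + g σ * f τ * h σ
        - g σ * f σ * h τ - g τ * f τ * h σ := by
      have := mul_nonneg (mul_nonneg hhτ.le hhσ.le) hsy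
      calc (0:ℝ) ≤ h τ * h σ * ((g τ - g σ) * (f σ / h σ - f τ / h τ)) := this
        _ = g τ * f σ * h τ + g σ * f τ * h σ - g σ * f σ * h τ - g τ * f τ * h σ := by
            field_simp
            ring
    have hwα : (0:ℝ) ≤ Real.exp ((β - 1) / β * (Real.log x - Real.log τ)) *
        (Real.log x - Real.log τ) ^ (α - 1) / τ := by
      have := Real.rpow_nonneg hlτ (α - 1)
      positivity
    have hwφ : (0:ℝ) ≤ Real.exp ((φ' - 1) / φ' * (Real.log x - Real.log σ)) *
        (Real.log x - Real.log σ) ^ (φ - 1) / σ := by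
      have := Real.rpow_nonneg hlσ (φ - 1)
      positivity
    have hFeq : F (τ, σ) =
        (Real.exp ((β - 1) / β * (Real.log x - Real.log τ)) *
          (Real.log x - Real.log τ) ^ (α - 1) / τ) *
        (Real.exp ((φ' - 1) / φ' * (Real.log x - Real.log σ)) *
          (Real.log x - Real.log σ) ^ (φ - 1) / σ) *
        (g τ * f σ * h τ + g σ * f τ * h σ - g σ * f σ * h τ - g τ * f τ * h σ) := by
      simp only [hF, Hker]
      ring
    rw [hFeq]
    exact mul_nonneg (mul_nonneg hwα hwφ) hB
  -- split the double integral into a combination of products of single integrals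
  have hint : ∫ z, F z ∂(μ.prod μ) =
      (∫ t, Hker α β x f t ∂μ) * (∫ t, Hker φ φ' x (fun t => g t * h t) t ∂μ) +
      (∫ t, Hker α β x (fun t => g t * h t) t ∂μ) * (∫ t, Hker φ φ' x f t ∂μ) -
      ((∫ t, Hker α β x h t ∂μ) * (∫ t, Hker φ φ' x (fun t => g t * f t) t ∂μ) +
       (∫ t, Hker α β x (fun t => g t * f t) t ∂μ) * (∫ t, Hker φ φ' x h t ∂μ)) := by
    have i1 := hfint.mul_prod hghint'
    have i2 := hghint.mul_prod hfint'
    have i3 := hhint.mul_prod hgfint'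
    have i4 := hgfint.mul_prod hhint'
    rw [← hμ] at i1 i2 i3 i4
    have i12 : Integrable (fun z : ℝ × ℝ => Hker α β x f z.1 * Hker φ φ' x (fun t => g t * h t) z.2 +
        Hker α β x (fun t => g t * h t) z.1 * Hker φ φ' x f z.2) (μ.prod μ) := i1.add i2
    have i34 : Integrable (fun z : ℝ × ℝ => Hker α β x h z.1 * Hker φ φ' x (fun t => g t * f t) z.2 +
        Hker α β x (fun t => g t * f t) z.1 * Hker φ φ' x h z.2) (μ.prod μ) := i3.add i4
    simp only [hF]
    rw [integral_sub i12 i34, integral_add i1 i2, integral_add i3 i4,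
      integral_prod_mul, integral_prod_mul, integral_prod_mul, integral_prod_mul]
  rw [hint] at hFnn
  -- conclude
  simp only [H]
  have key := sub_nonneg.1 hFnn
  nlinarith [mul_pos cα cφ, mul_le_mul_of_nonneg_left key (mul_pos cα cφ).le]
end

section
/- Let f, h be positive continuous functions on [1,∞) with f ≤ h, and suppose f/h is decreasing and f is increasing on [1,∞). Then for any p ≥ 1, α > 0, β ∈ (0,1], x > 1: H^{α,β}_{1,x}[f](x) / H^{α,β}_{1,x}[h](x) ≥ H^{α,β}_{1,x}[f^p](x) / H^{α,β}_{1,x}[h^p](x). -/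
open MeasureTheory Real

lemma bracket_aux {p a b c d : ℝ} (hp : 1 ≤ p) (ha : 0 < a)
    (hab : a ≤ b) (hr : b * c ≤ a * d) :
    a ^ p * d + b ^ p * c ≤ a * (b ^ (p - 1) * d) + b * (a ^ (p - 1) * c) := by
  have hb : 0 < b := lt_of_lt_of_le ha hab
  have e1 : a ^ p = a * a ^ (p - 1) := by
    have := Real.rpow_add ha 1 (p - 1)
    rw [Real.rpow_one] at this
    rw [show (1 : ℝ) + (p - 1) = p by ring] at this
    exact this
  have e2 : b ^ p = b * b ^ (p - 1) := by
    have := Real.rpow_add hb 1 (p - 1)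
    rw [Real.rpow_one] at this
    rw [show (1 : ℝ) + (p - 1) = p by ring] at this
    exact this
  have h2 : a ^ (p - 1) ≤ b ^ (p - 1) := Real.rpow_le_rpow ha.le hab (by linarith)
  rw [e1, e2]
  nlinarith [mul_nonneg (sub_nonneg.2 hr) (sub_nonneg.2 h2)]

theorem stmt_17 (p α β x : ℝ) (f h : ℝ → ℝ) (hp : 1 ≤ p) (hα : 0 < α)
    (hβ : β ∈ Set.Ioc (0:ℝ) 1) (hx : 1 < x)
    (hf : ∀ t ∈ Set.Ici (1:ℝ), 0 < f t) (hh : ∀ t ∈ Set.Ici (1:ℝ), 0 < h t)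
    (hfc : ContinuousOn f (Set.Ici 1)) (hhc : ContinuousOn h (Set.Ici 1))
    (hle : ∀ t ∈ Set.Ici (1:ℝ), f t ≤ h t)
    (hdec : AntitoneOn (fun t => f t / h t) (Set.Ici 1))
    (hinc : MonotoneOn f (Set.Ici 1))
    (hfint : IntegrableOn (Hker α β x f) (Set.Ioo 1 x))
    (hhint : IntegrableOn (Hker α β x h) (Set.Ioo 1 x))
    (hfpint : IntegrableOn (Hker α β x (fun t => f t ^ p)) (Set.Ioo 1 x))
    (hhpint : IntegrableOn (Hker α β x (fun t => h t ^ p)) (Set.Ioo 1 x))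
    (hhpos : 0 < H α β x h) (hhppos : 0 < H α β x (fun t => h t ^ p)) :
    H α β x (fun t => f t ^ p) / H α β x (fun t => h t ^ p) ≤
      H α β x f / H α β x h := by
  obtain ⟨hβ0, hβ1⟩ := hβ
  set K : ℝ → ℝ := fun t =>
    Real.exp ((β - 1) / β * (Real.log x - Real.log t)) *
      (Real.log x - Real.log t) ^ (α - 1) / t with hKdef
  have hHker : ∀ (z : ℝ → ℝ) (t : ℝ), Hker α β x z t = K t * z t := by
    intro z t; simp only [hKdef, Hker]; ring
  have hKpos : ∀ t ∈ Set.Ioo (1:ℝ) x, 0 < K t := by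
    intro t ht
    have ht0 : (0:ℝ) < t := lt_trans one_pos ht.1
    have hlog : 0 < Real.log x - Real.log t :=
      sub_pos.2 (Real.log_lt_log ht0 ht.2)
    exact div_pos (mul_pos (Real.exp_pos _) (Real.rpow_pos_of_pos hlog _)) ht0
  set g : ℝ → ℝ := fun t => f t ^ (p - 1) * h t with hgdef
  -- continuity of Hker g on Ioo 1 x
  have hsub : Set.Ioo (1:ℝ) x ⊆ Set.Ici 1 := fun t ht => le_of_lt ht.1
  have hgc : ContinuousOn g (Set.Ici 1) :=
    (hfc.rpow_const fun t ht => Or.inl (hf t ht).ne').mul hhc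
  have hKcont : ContinuousOn (Hker α β x g) (Set.Ioo 1 x) := by
    unfold Hker
    apply ContinuousOn.div
    · apply ContinuousOn.mul
      · apply ContinuousOn.mul
        · apply Real.continuous_exp.comp_continuousOn
          exact continuousOn_const.mul (continuousOn_const.sub
            (Real.continuousOn_log.mono (fun t ht => ne_of_gt (lt_trans one_pos ht.1))))
        · apply ContinuousOn.rpow_const
          · exact continuousOn_const.sub
              (Real.continuousOn_log.mono (fun t ht => ne_of_gt (lt_trans one_pos ht.1)))
          · intro t ht
            exact Or.inl (sub_pos.2 (Real.log_lt_log (lt_trans one_pos ht.1) ht.2)).ne'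
      · exact hgc.mono hsub
    · exact continuousOn_id
    · intro t ht; exact ne_of_gt (lt_trans one_pos ht.1)
  -- pointwise bounds for g
  have hgbound : ∀ t ∈ Set.Ioo (1:ℝ) x,
      0 ≤ Hker α β x g t ∧ Hker α β x g t ≤ Hker α β x (fun u => h u ^ p) t := by
    intro t ht
    have ht1 : t ∈ Set.Ici (1:ℝ) := hsub ht
    have hft := hf t ht1
    have hht := hh t ht1
    have hKt := (hKpos t ht).le
    have h1 : g t ≤ h t ^ p := by
      have : f t ^ (p - 1) ≤ h t ^ (p - 1) :=
        Real.rpow_le_rpow hft.le (hle t ht1) (by linarith)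
      have e2 : h t ^ p = h t ^ (p - 1) * h t := by
        have := Real.rpow_add hht (p - 1) 1
        rw [Real.rpow_one] at this
        rw [show p - 1 + 1 = p by ring] at this
        exact this
      rw [e2, hgdef]
      exact mul_le_mul_of_nonneg_right this hht.le
    have h0 : 0 ≤ g t :=
      mul_nonneg (Real.rpow_nonneg hft.le _) hht.le
    rw [hHker, hHker]
    exact ⟨mul_nonneg hKt h0, mul_le_mul_of_nonneg_left h1 hKt⟩
  have hgint : IntegrableOn (Hker α β x g) (Set.Ioo 1 x) := by
    apply MeasureTheory.Integrable.mono hhpint (hKcont.aestronglyMeasurable measurableSet_Ioo)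
    filter_upwards [ae_restrict_mem measurableSet_Ioo] with t ht
    obtain ⟨h0, h1⟩ := hgbound t ht
    rw [Real.norm_eq_abs, Real.norm_eq_abs, abs_of_nonneg h0]
    exact le_trans h1 (le_abs_self _)
  -- double integral step
  set μ := volume.restrict (Set.Ioo (1:ℝ) x) with hμ
  have hI1 : Integrable (fun z : ℝ × ℝ => Hker α β x f z.1 * Hker α β x g z.2)
      (μ.prod μ) := hfint.mul_prod hgint
  have hI2 : Integrable (fun z : ℝ × ℝ => Hker α β x g z.1 * Hker α β x f z.2)
      (μ.prod μ) := hgint.mul_prod hfint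
  have hI3 : Integrable (fun z : ℝ × ℝ =>
      Hker α β x (fun t => f t ^ p) z.1 * Hker α β x h z.2) (μ.prod μ) :=
    hfpint.mul_prod hhint
  have hI4 : Integrable (fun z : ℝ × ℝ =>
      Hker α β x h z.1 * Hker α β x (fun t => f t ^ p) z.2) (μ.prod μ) :=
    hhint.mul_prod hfpint
  have hprodmem : ∀ᵐ z ∂(μ.prod μ), z ∈ Set.Ioo (1:ℝ) x ×ˢ Set.Ioo (1:ℝ) x := by
    rw [hμ, Measure.prod_restrict]
    exact ae_restrict_mem (measurableSet_Ioo.prod measurableSet_Ioo)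
  have hkey : 0 ≤ ∫ z : ℝ × ℝ,
      (Hker α β x f z.1 * Hker α β x g z.2 + Hker α β x g z.1 * Hker α β x f z.2
        - (Hker α β x (fun t => f t ^ p) z.1 * Hker α β x h z.2
          + Hker α β x h z.1 * Hker α β x (fun t => f t ^ p) z.2)) ∂(μ.prod μ) := by
    apply integral_nonneg_of_ae
    filter_upwards [hprodmem] with z hz
    obtain ⟨ht, hs⟩ := hz
    set t := z.1
    set s := z.2
    have ht1 : t ∈ Set.Ici (1:ℝ) := hsub ht
    have hs1 : s ∈ Set.Ici (1:ℝ) := hsub hs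
    have hbr : f t ^ p * h s + f s ^ p * h t ≤ f t * g s + f s * g t := by
      rcases le_total t s with hts | hts
      · have hab : f t ≤ f s := hinc ht1 hs1 hts
        have hr : f s * h t ≤ f t * h s := by
          have := hdec ht1 hs1 hts
          rwa [div_le_div_iff₀ (hh s hs1) (hh t ht1)] at this
        have := bracket_aux hp (hf t ht1) hab hr
        simp only [hgdef]; linarith
      · have hab : f s ≤ f t := hinc hs1 ht1 hts
        have hr : f t * h s ≤ f s * h t := by
          have := hdec hs1 ht1 hts
          rwa [div_le_div_iff₀ (hh t ht1) (hh s hs1)] at this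
        have := bracket_aux hp (hf s hs1) hab hr
        simp only [hgdef]; linarith
    have hKt := (hKpos t ht).le
    have hKs := (hKpos s hs).le
    have hexpand : Hker α β x f t * Hker α β x g s + Hker α β x g t * Hker α β x f s
        - (Hker α β x (fun u => f u ^ p) t * Hker α β x h s
          + Hker α β x h t * Hker α β x (fun u => f u ^ p) s)
        = K t * K s *
          ((f t * g s + f s * g t) - (f t ^ p * h s + f s ^ p * h t)) := by
      simp only [hHker]; ring
    rw [hexpand]
    exact mul_nonneg (mul_nonneg hKt hKs) (by linarith)
  have e0 : (∫ z : ℝ × ℝ,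
      (Hker α β x f z.1 * Hker α β x g z.2 + Hker α β x g z.1 * Hker α β x f z.2
        - (Hker α β x (fun t => f t ^ p) z.1 * Hker α β x h z.2
          + Hker α β x h z.1 * Hker α β x (fun t => f t ^ p) z.2)) ∂(μ.prod μ))
      = (∫ z : ℝ × ℝ, (Hker α β x f z.1 * Hker α β x g z.2
          + Hker α β x g z.1 * Hker α β x f z.2) ∂(μ.prod μ))
        - (∫ z : ℝ × ℝ, (Hker α β x (fun t => f t ^ p) z.1 * Hker α β x h z.2
          + Hker α β x h z.1 * Hker α β x (fun t => f t ^ p) z.2) ∂(μ.prod μ)) :=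
    integral_sub (hI1.add hI2) (hI3.add hI4)
  have e1 : (∫ z : ℝ × ℝ, (Hker α β x f z.1 * Hker α β x g z.2
        + Hker α β x g z.1 * Hker α β x f z.2) ∂(μ.prod μ))
      = (∫ z : ℝ × ℝ, Hker α β x f z.1 * Hker α β x g z.2 ∂(μ.prod μ))
        + (∫ z : ℝ × ℝ, Hker α β x g z.1 * Hker α β x f z.2 ∂(μ.prod μ)) :=
    integral_add hI1 hI2
  have e2 : (∫ z : ℝ × ℝ, (Hker α β x (fun t => f t ^ p) z.1 * Hker α β x h z.2
        + Hker α β x h z.1 * Hker α β x (fun t => f t ^ p) z.2) ∂(μ.prod μ))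
      = (∫ z : ℝ × ℝ, Hker α β x (fun t => f t ^ p) z.1 * Hker α β x h z.2 ∂(μ.prod μ))
        + (∫ z : ℝ × ℝ, Hker α β x h z.1 * Hker α β x (fun t => f t ^ p) z.2 ∂(μ.prod μ)) :=
    integral_add hI3 hI4
  have e3 : (∫ z : ℝ × ℝ, Hker α β x f z.1 * Hker α β x g z.2 ∂(μ.prod μ))
      = (∫ t, Hker α β x f t ∂μ) * (∫ t, Hker α β x g t ∂μ) := integral_prod_mul _ _
  have e4 : (∫ z : ℝ × ℝ, Hker α β x g z.1 * Hker α β x f z.2 ∂(μ.prod μ))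
      = (∫ t, Hker α β x g t ∂μ) * (∫ t, Hker α β x f t ∂μ) := integral_prod_mul _ _
  have e5 : (∫ z : ℝ × ℝ, Hker α β x (fun t => f t ^ p) z.1 * Hker α β x h z.2 ∂(μ.prod μ))
      = (∫ t, Hker α β x (fun u => f u ^ p) t ∂μ) * (∫ t, Hker α β x h t ∂μ) :=
    integral_prod_mul _ _
  have e6 : (∫ z : ℝ × ℝ, Hker α β x h z.1 * Hker α β x (fun t => f t ^ p) z.2 ∂(μ.prod μ))
      = (∫ t, Hker α β x h t ∂μ) * (∫ t, Hker α β x (fun u => f u ^ p) t ∂μ) :=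
    integral_prod_mul _ _
  rw [e0, e1, e2, e3, e4, e5, e6] at hkey
  set If := ∫ t in Set.Ioo (1:ℝ) x, Hker α β x f t with hIf
  set Ig := ∫ t in Set.Ioo (1:ℝ) x, Hker α β x g t with hIg
  set Ip := ∫ t in Set.Ioo (1:ℝ) x, Hker α β x (fun u => f u ^ p) t with hIp
  set Ih := ∫ t in Set.Ioo (1:ℝ) x, Hker α β x h t with hIh
  set Ihp := ∫ t in Set.Ioo (1:ℝ) x, Hker α β x (fun u => h u ^ p) t with hIhp
  have hstep1 : Ip * Ih ≤ If * Ig := by nlinarith [hkey]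
  have hIf0 : 0 ≤ If := by
    apply setIntegral_nonneg measurableSet_Ioo
    intro t ht
    rw [hHker]
    exact mul_nonneg (hKpos t ht).le (hf t (hsub ht)).le
  have hstep2 : Ig ≤ Ihp :=
    setIntegral_mono_on hgint hhpint measurableSet_Ioo fun t ht => (hgbound t ht).2
  have hmain : Ip * Ih ≤ If * Ihp :=
    le_trans hstep1 (mul_le_mul_of_nonneg_left hstep2 hIf0)
  have hC : 0 < 1 / (β ^ α * Real.Gamma α) :=
    div_pos one_pos (mul_pos (Real.rpow_pos_of_pos hβ0 α) (Real.Gamma_pos_of_pos hα))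
  rw [div_le_div_iff₀ hhppos hhpos]
  show (1 / (β ^ α * Real.Gamma α)) * Ip * ((1 / (β ^ α * Real.Gamma α)) * Ih)
      ≤ (1 / (β ^ α * Real.Gamma α)) * If * ((1 / (β ^ α * Real.Gamma α)) * Ihp)
  set C := 1 / (β ^ α * Real.Gamma α)
  calc C * Ip * (C * Ih) = C * C * (Ip * Ih) := by ring
    _ ≤ C * C * (If * Ihp) :=
        mul_le_mul_of_nonneg_left hmain (mul_nonneg hC.le hC.le)
    _ = C * If * (C * Ihp) := by ring
end

section
/- Let f, h be positive continuous functions on [1,∞) with f ≤ h, f/h decreasing and f increasing on [1,∞). Then for p ≥ 1, α, φ > 0, β, φ' ∈ (0,1], x > 1: H^{α,β}_{1,x}[f](x)·H^{φ,φ'}_{1,x}[h^p](x) + H^{φ,φ'}_{1,x}[f](x)·H^{α,β}_{1,x}[h^p](x) ≥ H^{α,β}_{1,x}[h](x)·H^{φ,φ'}_{1,x}[f^p](x) + H^{φ,φ'}_{1,x}[h](x)·H^{α,β}_{1,x}[f^p](x). -/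
open MeasureTheory Real

/-- Scalar inequality behind the main result. -/
lemma scalar_key (p a b A B : ℝ) (hp : 1 ≤ p) (ha : 0 < a) (hab : a ≤ b)
    (haA : a ≤ A) (hbB : b ≤ B) (hcross : b * A ≤ a * B) :
    A * b ^ p + B * a ^ p ≤ a * B ^ p + b * A ^ p := by
  have hb : 0 < b := ha.trans_le hab
  have hA : 0 < A := ha.trans_le haA
  have hB : 0 < B := hb.trans_le hbB
  set q : ℝ := p - 1 with hqdef
  have hq : 0 ≤ q := by simp [hqdef]; linarith
  have h1 : a ^ q ≤ A ^ q := Real.rpow_le_rpow ha.le haA hq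
  have h2 : (a * A) ^ q ≤ (b * A) ^ q :=
    Real.rpow_le_rpow (by positivity) (by nlinarith) hq
  have h3 : (b * A) ^ q ≤ (a * B) ^ q :=
    Real.rpow_le_rpow (by positivity) hcross hq
  rw [Real.mul_rpow ha.le hA.le, Real.mul_rpow hb.le hA.le] at h2
  rw [Real.mul_rpow hb.le hA.le, Real.mul_rpow ha.le hB.le] at h3
  have ea : a ^ p = a ^ q * a := by
    rw [show p = q + 1 by ring, Real.rpow_add ha, Real.rpow_one]
  have eb : b ^ p = b ^ q * b := by
    rw [show p = q + 1 by ring, Real.rpow_add hb, Real.rpow_one]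
  have eA : A ^ p = A ^ q * A := by
    rw [show p = q + 1 by ring, Real.rpow_add hA, Real.rpow_one]
  have eB : B ^ p = B ^ q * B := by
    rw [show p = q + 1 by ring, Real.rpow_add hB, Real.rpow_one]
  rw [ea, eb, eA, eB]
  have hPa : 0 < a ^ q := Real.rpow_pos_of_pos ha q
  have hPb : 0 < b ^ q := Real.rpow_pos_of_pos hb q
  have hPA : 0 < A ^ q := Real.rpow_pos_of_pos hA q
  have hPB : 0 < B ^ q := Real.rpow_pos_of_pos hB q
  have key : a ^ q * (A * (b ^ q * b) + B * (a ^ q * a)) ≤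
      a ^ q * (a * (B ^ q * B) + b * (A ^ q * A)) := by
    have n1 : 0 ≤ (A ^ q - a ^ q) * (A * (b ^ q * b)) :=
      mul_nonneg (by linarith) (by positivity)
    have n2 : 0 ≤ (A ^ q - a ^ q) * (B * (a ^ q * a)) :=
      mul_nonneg (by linarith) (by positivity)
    have n3 : 0 ≤ (a ^ q * B ^ q - b ^ q * A ^ q) * (a * B) :=
      mul_nonneg (by linarith) (by positivity)
    have n4 : 0 ≤ (b ^ q * A ^ q - a ^ q * A ^ q) * (a * B - b * A) :=
      mul_nonneg (by linarith) (by linarith)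
    nlinarith [n1, n2, n3, n4]
  exact le_of_mul_le_mul_left key hPa

/-- Pointwise two-variable inequality. -/
lemma ptwise_s18 (p : ℝ) (f h : ℝ → ℝ) (hp : 1 ≤ p)
    (hf : ∀ t ∈ Set.Ici (1:ℝ), 0 < f t) (hh : ∀ t ∈ Set.Ici (1:ℝ), 0 < h t)
    (hle : ∀ t ∈ Set.Ici (1:ℝ), f t ≤ h t)
    (hdec : AntitoneOn (fun t => f t / h t) (Set.Ici 1))
    (hinc : MonotoneOn f (Set.Ici 1))
    (t s : ℝ) (ht : t ∈ Set.Ici (1:ℝ)) (hs : s ∈ Set.Ici (1:ℝ)) :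
    h t * f s ^ p + f t ^ p * h s ≤ f t * h s ^ p + h t ^ p * f s := by
  have main : ∀ u v : ℝ, u ∈ Set.Ici (1:ℝ) → v ∈ Set.Ici (1:ℝ) → u ≤ v →
      h u * f v ^ p + f u ^ p * h v ≤ f u * h v ^ p + h u ^ p * f v := by
    intro u v hu hv huv
    have hcross : f v * h u ≤ f u * h v := by
      have := hdec hu hv huv
      simp only at this
      rw [div_le_div_iff₀ (hh v hv) (hh u hu)] at this
      linarith
    have := scalar_key p (f u) (f v) (h u) (h v) hp (hf u hu)
      (hinc hu hv huv) (hle u hu) (hle v hv) (by linarith)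
    linarith
  rcases le_total t s with hts | hst
  · have := main t s ht hs hts
    linarith
  · have := main s t hs ht hst
    linarith

theorem stmt_18 (p α β φ φ' x : ℝ) (f h : ℝ → ℝ) (hp : 1 ≤ p) (hα : 0 < α)
    (hφ : 0 < φ) (hβ : β ∈ Set.Ioc (0:ℝ) 1) (hφ' : φ' ∈ Set.Ioc (0:ℝ) 1) (hx : 1 < x)
    (hf : ∀ t ∈ Set.Ici (1:ℝ), 0 < f t) (hh : ∀ t ∈ Set.Ici (1:ℝ), 0 < h t)
    (hfc : ContinuousOn f (Set.Ici 1)) (hhc : ContinuousOn h (Set.Ici 1))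
    (hle : ∀ t ∈ Set.Ici (1:ℝ), f t ≤ h t)
    (hdec : AntitoneOn (fun t => f t / h t) (Set.Ici 1))
    (hinc : MonotoneOn f (Set.Ici 1))
    (hfint : IntegrableOn (Hker α β x f) (Set.Ioo 1 x))
    (hhint : IntegrableOn (Hker α β x h) (Set.Ioo 1 x))
    (hfpint : IntegrableOn (Hker α β x (fun t => f t ^ p)) (Set.Ioo 1 x))
    (hhpint : IntegrableOn (Hker α β x (fun t => h t ^ p)) (Set.Ioo 1 x))
    (hfint' : IntegrableOn (Hker φ φ' x f) (Set.Ioo 1 x))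
    (hhint' : IntegrableOn (Hker φ φ' x h) (Set.Ioo 1 x))
    (hfpint' : IntegrableOn (Hker φ φ' x (fun t => f t ^ p)) (Set.Ioo 1 x))
    (hhpint' : IntegrableOn (Hker φ φ' x (fun t => h t ^ p)) (Set.Ioo 1 x)) :
    H α β x h * H φ φ' x (fun t => f t ^ p) +
        H φ φ' x h * H α β x (fun t => f t ^ p) ≤
      H α β x f * H φ φ' x (fun t => h t ^ p) +
        H φ φ' x f * H α β x (fun t => h t ^ p) := by
  set S : Set ℝ := Set.Ioo 1 x with hSdef
  set μ : Measure ℝ := volume.restrict S with hμdef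
  -- kernel positivity
  have hker_pos : ∀ γ δ : ℝ, 0 < δ → ∀ t ∈ S,
      0 < Real.exp ((δ - 1) / δ * (Real.log x - Real.log t)) *
        (Real.log x - Real.log t) ^ (γ - 1) / t := by
    intro γ δ hδ t htS
    obtain ⟨ht1, htx⟩ := htS
    have ht0 : 0 < t := by linarith
    have hlog : 0 < Real.log x - Real.log t := by
      have := Real.log_lt_log ht0 htx
      linarith
    positivity
  -- the pointwise inequality on kernels
  have hptw : ∀ z ∈ S ×ˢ S,
      Hker α β x h z.1 * Hker φ φ' x (fun t => f t ^ p) z.2 +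
        Hker α β x (fun t => f t ^ p) z.1 * Hker φ φ' x h z.2 ≤
      Hker α β x f z.1 * Hker φ φ' x (fun t => h t ^ p) z.2 +
        Hker α β x (fun t => h t ^ p) z.1 * Hker φ φ' x f z.2 := by
    rintro ⟨t, s⟩ ⟨htS, hsS⟩
    have hKt := hker_pos α β hβ.1 t htS
    have hKs := hker_pos φ φ' hφ'.1 s hsS
    set Kt : ℝ := Real.exp ((β - 1) / β * (Real.log x - Real.log t)) *
        (Real.log x - Real.log t) ^ (α - 1) / t with hKtdef
    set Ks : ℝ := Real.exp ((φ' - 1) / φ' * (Real.log x - Real.log s)) *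
        (Real.log x - Real.log s) ^ (φ - 1) / s with hKsdef
    have ht1 : t ∈ Set.Ici (1:ℝ) := le_of_lt htS.1
    have hs1 : s ∈ Set.Ici (1:ℝ) := le_of_lt hsS.1
    have hpt := ptwise_s18 p f h hp hf hh hle hdec hinc t s ht1 hs1
    have expand : ∀ γ δ : ℝ, ∀ z : ℝ → ℝ, ∀ u : ℝ,
        Hker γ δ x z u = (Real.exp ((δ - 1) / δ * (Real.log x - Real.log u)) *
          (Real.log x - Real.log u) ^ (γ - 1) / u) * z u := by
      intro γ δ z u
      simp only [Hker]
      ring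
    simp only [expand, ← hKtdef, ← hKsdef]
    have key : Kt * Ks * (h t * f s ^ p + f t ^ p * h s) ≤
        Kt * Ks * (f t * h s ^ p + h t ^ p * f s) :=
      mul_le_mul_of_nonneg_left hpt (by positivity)
    nlinarith [key]
  -- integrability over the product
  have A1 : Integrable (fun z : ℝ × ℝ =>
      Hker α β x h z.1 * Hker φ φ' x (fun t => f t ^ p) z.2) (μ.prod μ) :=
    hhint.mul_prod hfpint'
  have A2 : Integrable (fun z : ℝ × ℝ =>
      Hker α β x (fun t => f t ^ p) z.1 * Hker φ φ' x h z.2) (μ.prod μ) :=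
    hfpint.mul_prod hhint'
  have B1 : Integrable (fun z : ℝ × ℝ =>
      Hker α β x f z.1 * Hker φ φ' x (fun t => h t ^ p) z.2) (μ.prod μ) :=
    hfint.mul_prod hhpint'
  have B2 : Integrable (fun z : ℝ × ℝ =>
      Hker α β x (fun t => h t ^ p) z.1 * Hker φ φ' x f z.2) (μ.prod μ) :=
    hhpint.mul_prod hfint'
  -- a.e. membership in the product set
  have hmem : ∀ᵐ z ∂(μ.prod μ), z ∈ S ×ˢ S := by
    rw [hμdef, Measure.prod_restrict]
    exact ae_restrict_mem (measurableSet_Ioo.prod measurableSet_Ioo)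
  have hmono : ∫ z, (Hker α β x h z.1 * Hker φ φ' x (fun t => f t ^ p) z.2 +
        Hker α β x (fun t => f t ^ p) z.1 * Hker φ φ' x h z.2) ∂(μ.prod μ) ≤
      ∫ z, (Hker α β x f z.1 * Hker φ φ' x (fun t => h t ^ p) z.2 +
        Hker α β x (fun t => h t ^ p) z.1 * Hker φ φ' x f z.2) ∂(μ.prod μ) := by
    refine integral_mono_ae (A1.add A2) (B1.add B2) ?_
    filter_upwards [hmem] with z hz
    exact hptw z hz
  rw [integral_add A1 A2, integral_add B1 B2, integral_prod_mul, integral_prod_mul,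
    integral_prod_mul, integral_prod_mul] at hmono
  -- put things back into H form
  have hΓα : 0 < Real.Gamma α := Real.Gamma_pos_of_pos hα
  have hΓφ : 0 < Real.Gamma φ := Real.Gamma_pos_of_pos hφ
  have hβα : 0 < β ^ α := Real.rpow_pos_of_pos hβ.1 α
  have hφφ : 0 < φ' ^ φ := Real.rpow_pos_of_pos hφ'.1 φ
  have hc : 0 < 1 / (β ^ α * Real.Gamma α) := by positivity
  have hc' : 0 < 1 / (φ' ^ φ * Real.Gamma φ) := by positivity
  simp only [H]
  set c := 1 / (β ^ α * Real.Gamma α)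
  set c' := 1 / (φ' ^ φ * Real.Gamma φ)
  set Ih := ∫ t in Set.Ioo 1 x, Hker α β x h t
  set If := ∫ t in Set.Ioo 1 x, Hker α β x f t
  set Ifp := ∫ t in Set.Ioo 1 x, Hker α β x (fun t => f t ^ p) t
  set Ihp := ∫ t in Set.Ioo 1 x, Hker α β x (fun t => h t ^ p) t
  set Jh := ∫ t in Set.Ioo 1 x, Hker φ φ' x h t
  set Jf := ∫ t in Set.Ioo 1 x, Hker φ φ' x f t
  set Jfp := ∫ t in Set.Ioo 1 x, Hker φ φ' x (fun t => f t ^ p) t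
  set Jhp := ∫ t in Set.Ioo 1 x, Hker φ φ' x (fun t => h t ^ p) t
  have hkey : Ih * Jfp + Ifp * Jh ≤ If * Jhp + Ihp * Jf := hmono
  have : c * c' * (Ih * Jfp + Ifp * Jh) ≤ c * c' * (If * Jhp + Ihp * Jf) :=
    mul_le_mul_of_nonneg_left hkey (by positivity)
  nlinarith [this]
end
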